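/- arXiv:1406.2110 — 2 statements merged into one kernel-verified Lean document; each statement's English description precedes it below -/
import Mathlib

section
/- If two first-order terms are unifiable, then they have a most general unifier: a unifier θ such that any other unifier of the two terms factors as an instance of θ. -/
/-- First-order terms over natural-number symbols: variables and applications. -/
inductive Tm : Type
  | var : ℕ → Tm
  | app : ℕ → List Tm → Tm

namespace Tm

/-- Apply a substitution (map from variables to terms) homomorphically. -/
def subst (σ : ℕ → Tm) : Tm → Tm
  | var x => σ x
  | app f ts => app f (ts.attach.map fun ⟨t, _⟩ => subst σ t)

/-- List of variables occurring in a term. -/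
def varsL : Tm → List ℕ
  | var x => [x]
  | app _ ts => ts.attach.flatMap fun ⟨t, _⟩ => varsL t

/-- Height of a term: maximal distance from the root to a subterm. -/
def height : Tm → ℕ
  | var _ => 0
  | app _ ts => (ts.attach.map fun ⟨t, _⟩ => height t + 1).foldr max 0

/-- Heights of the occurrences of the variable `x` in a term. -/
def occs (x : ℕ) : Tm → List ℕ
  | var y => if y = x then [0] else []
  | app _ ts => ts.attach.flatMap fun ⟨t, _⟩ => (occs x t).map (· + 1)

/-- Symbols occurring in a term, together with the arity they are used with. -/
def symar : Tm → List (ℕ × ℕ)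
  | var _ => []
  | app f ts => (f, ts.length) :: ts.attach.flatMap fun ⟨t, _⟩ => symar t

end Tm

open Tm

/-- Set of variables of a term. -/
def tvars (t : Tm) : Set ℕ := {x | x ∈ t.varsL}

/-- A term is closed when it has no variables. -/
def Closed (t : Tm) : Prop := t.varsL = []

/-- A substitution is finitary when it is the identity on all but finitely many variables. -/
def Finitary (σ : ℕ → Tm) : Prop := {x | σ x ≠ .var x}.Finite

/-- `σ` unifies `t` and `u`. -/
def Unifies (σ : ℕ → Tm) (t u : Tm) : Prop := subst σ t = subst σ u

/-- `θ` is a most general unifier of `t` and `u`: a (finitary) unifier such that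
any other finitary unifier factors as an instance of it. -/
def IsMGU (θ : ℕ → Tm) (t u : Tm) : Prop :=
  Finitary θ ∧ Unifies θ t u ∧
    ∀ σ, Finitary σ → Unifies σ t u → ∃ ρ, Finitary ρ ∧ ∀ x, σ x = subst ρ (θ x)

/-- Renaming of a term along a bijection of variables. -/
def rename (π : ℕ ≃ ℕ) (t : Tm) : Tm := subst (fun x => .var (π x)) t

/-- A flow is (the data of) a pair of terms `head ⊸ body`. -/
abbrev UFlow := Tm × Tm

/-- The flow condition: the variables of the head occur in the body. -/
def IsFlow (f : UFlow) : Prop := tvars f.1 ⊆ tvars f.2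

/-- Equality of flows up to (simultaneous, bijective) renaming of variables. -/
def FlowEquiv (f g : UFlow) : Prop :=
  ∃ π : ℕ ≃ ℕ, rename π f.1 = g.1 ∧ rename π f.2 = g.2

/-- Variables of a flow. -/
def flowVars (f : UFlow) : Set ℕ := tvars f.1 ∪ tvars f.2

/-- `h` is a product of the flows `f = u ⊸ v` and `g = t ⊸ w`: choosing representatives
with disjoint variables, `h = uθ ⊸ wθ` for `θ` a most general unifier of `v` and `t`. -/
def IsProd (f g h : UFlow) : Prop :=
  ∃ f' g' θ, FlowEquiv f f' ∧ FlowEquiv g g' ∧ flowVars f' ∩ flowVars g' = ∅ ∧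
    IsMGU θ f'.2 g'.1 ∧ h = (subst θ f'.1, subst θ g'.2)

/-- A wiring: a set of flows (finite sets of flows are considered up to renaming,
so we model them as sets of representatives). -/
abbrev Wiring := Set UFlow

/-- Product of wirings: pointwise product of flows, where defined. -/
def wmul (F G : Wiring) : Wiring := {h | ∃ f ∈ F, ∃ g ∈ G, IsProd f g h}

/-- The unit wiring `I = x ⊸ x`. -/
def wI : Wiring := {f | FlowEquiv (.var 0, .var 0) f}

/-- Powers of a wiring. -/
def wpow (F : Wiring) : ℕ → Wiring
  | 0 => wI
  | n + 1 => wmul F (wpow F n)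

/-- Equality of wirings up to renaming of each flow. -/
def WEq (F G : Wiring) : Prop :=
  (∀ f ∈ F, ∃ g ∈ G, FlowEquiv f g) ∧ ∀ g ∈ G, ∃ f ∈ F, FlowEquiv f g

/-- A fact: a flow of the form `t ⊸ t` with `t` closed. -/
def IsFact (f : UFlow) : Prop := Closed f.1 ∧ f.2 = f.1

/-- Application of a wiring to (the fact associated with) a closed term:
the set of product flows. -/
def appF (F : Wiring) (t : Tm) : Set UFlow := {h | ∃ f ∈ F, IsProd f (t, t) h}

/-- Application of a wiring to a fact, keeping the facts produced. -/
def factApp (F : Wiring) (t : Tm) : Set Tm := {v | ∃ f ∈ F, IsProd f (t, t) (v, v)}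

/-- A wiring is deterministic if it produces at most one fact from any fact. -/
def Deterministic (F : Wiring) : Prop := ∀ t, Closed t → (appF F t).Subsingleton

/-- Two terms are matchable if renamings of them with disjoint variables are unifiable. -/
def Matchable (t u : Tm) : Prop :=
  ∃ (π π' : ℕ ≃ ℕ), tvars (rename π t) ∩ tvars (rename π' u) = ∅ ∧
    ∃ θ, Finitary θ ∧ Unifies θ (rename π t) (rename π' u)

/-- A flow is balanced if each variable has all its occurrences at the same height. -/
def BalancedF (f : UFlow) : Prop :=
  ∀ x, ∀ n ∈ occs x f.1 ++ occs x f.2, ∀ m ∈ occs x f.1 ++ occs x f.2, n = m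

/-- Height of a flow. -/
def heightF (f : UFlow) : ℕ := max f.1.height f.2.height

/-- A wiring is balanced if all its flows are. -/
def BalancedW (F : Wiring) : Prop := ∀ f ∈ F, BalancedF f

/-- Height of a wiring: maximal height of its flows. -/
noncomputable def heightW (F : Wiring) : ℕ := sSup (heightF '' F)

/-- The computation space of a wiring `F`: closed terms (identified with the
corresponding facts) of height at most `heightW F` built using only symbols
(with their arities) occurring in `F` and the constant `⋆` (symbol `0`). -/
noncomputable def compSpace (F : Wiring) : Set Tm :=
  {t | Closed t ∧ t.height ≤ heightW F ∧
    ∀ q ∈ t.symar, q = (0, 0) ∨ ∃ f ∈ F, q ∈ f.1.symar ++ f.2.symar}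

/-- Nilpotency of a wiring: some power is the empty wiring. -/
def Nilpotent (F : Wiring) : Prop := ∃ n, 0 < n ∧ wpow F n = ∅

/-- Edges of the computation graph of `F`: from `u` to `v` iff `v ∈ F u`. -/
noncomputable def Edge (F : Wiring) (u v : Tm) : Prop :=
  u ∈ compSpace F ∧ v ∈ compSpace F ∧ v ∈ factApp F u

/-- Acyclicity of the computation graph of `F`. -/
noncomputable def AcyclicCG (F : Wiring) : Prop :=
  ¬ ∃ n, 0 < n ∧ ∃ c : ℕ → Tm, (∀ i < n, Edge F (c i) (c (i + 1))) ∧ c n = c 0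

namespace Tm

def size : Tm → ℕ
  | var _ => 1
  | app _ ts => 1 + (ts.attach.map fun ⟨t, _⟩ => size t).sum

@[simp] theorem subst_var (σ : ℕ → Tm) (x : ℕ) : subst σ (var x) = σ x := by rw [subst]

@[simp] theorem subst_app (σ : ℕ → Tm) (f : ℕ) (ts : List Tm) :
    subst σ (app f ts) = app f (ts.map (subst σ)) := by
  rw [subst]; congr 1; simp [List.attach_map_val]

@[simp] theorem varsL_var (x : ℕ) : varsL (var x) = [x] := by rw [varsL]

@[simp] theorem varsL_app (f : ℕ) (ts : List Tm) :
    varsL (app f ts) = ts.flatMap varsL := by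
  rw [varsL]; simp [List.attach_map_val]

@[simp] theorem height_var (x : ℕ) : height (var x) = 0 := by rw [height]

@[simp] theorem height_app (f : ℕ) (ts : List Tm) :
    height (app f ts) = (ts.map fun t => height t + 1).foldr max 0 := by
  rw [height]; congr 1; simp [List.attach_map_val]

@[simp] theorem size_var (x : ℕ) : size (var x) = 1 := by rw [size]

@[simp] theorem size_app (f : ℕ) (ts : List Tm) :
    size (app f ts) = 1 + (ts.map size).sum := by
  rw [size]; congr 1; simp [List.attach_map_val]

theorem size_lt_of_mem {t : Tm} {ts : List Tm} (h : t ∈ ts) (f : ℕ) :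
    size t < size (app f ts) := by
  have : size t ≤ (ts.map size).sum :=
    List.single_le_sum (by simp) _ (List.mem_map_of_mem (f := size) h)
  simp; omega

theorem tind (P : Tm → Prop) (hv : ∀ x, P (var x))
    (ha : ∀ f ts, (∀ t ∈ ts, P t) → P (app f ts)) : ∀ t, P t
  | var x => hv x
  | app f ts => ha f ts (fun t ht => tind P hv ha t)
termination_by t => size t
decreasing_by exact size_lt_of_mem ht f

end Tm

namespace Tm

def Finitary' (σ : ℕ → Tm) : Prop := {x | σ x ≠ .var x}.Finite

theorem subst_subst (σ τ : ℕ → Tm) (t : Tm) :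
    subst σ (subst τ t) = subst (fun y => subst σ (τ y)) t := by
  induction t using tind with
  | hv x => simp
  | ha f ts ih =>
    simp only [subst_app, List.map_map, app.injEq, true_and]
    exact List.map_congr_left fun t ht => ih t ht

theorem subst_congr_on {σ τ : ℕ → Tm} {t : Tm} (h : ∀ y ∈ varsL t, σ y = τ y) :
    subst σ t = subst τ t := by
  induction t using tind with
  | hv x => simpa using h x (by simp)
  | ha f ts ih =>
    simp only [subst_app, app.injEq, true_and]
    exact List.map_congr_left fun t ht => ih t ht fun y hy =>
      h y (by simp [List.mem_flatMap]; exact ⟨t, ht, hy⟩)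

theorem subst_id (t : Tm) : subst Tm.var t = t := by
  induction t using tind with
  | hv x => simp
  | ha f ts ih =>
    simp only [subst_app, app.injEq, true_and]
    exact List.map_congr_left ih |>.trans (List.map_id _)

theorem mem_varsL_subst {y : ℕ} {σ : ℕ → Tm} {t : Tm} (h : y ∈ varsL (subst σ t)) :
    ∃ z ∈ varsL t, y ∈ varsL (σ z) := by
  induction t using tind with
  | hv x => exact ⟨x, by simp, by simpa using h⟩
  | ha f ts ih =>
    simp only [subst_app, varsL_app, List.mem_flatMap, List.mem_map] at h
    obtain ⟨_, ⟨t, ht, rfl⟩, hy⟩ := h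
    obtain ⟨z, hz, hyz⟩ := ih t ht hy
    exact ⟨z, by simp [List.mem_flatMap]; exact ⟨t, ht, hz⟩, hyz⟩

theorem height_le_of_mem {t : Tm} {ts : List Tm} (h : t ∈ ts) (f : ℕ) :
    height t < height (app f ts) := by
  simp only [height_app]
  have : height t + 1 ≤ ((ts.map fun t => height t + 1).foldr max 0) := by
    have hm : height t + 1 ∈ ts.map fun t => height t + 1 := List.mem_map_of_mem h
    exact List.le_max_of_le (l := ts.map fun t => height t + 1) hm le_rfl
  omega

theorem height_subst_le {x : ℕ} {σ : ℕ → Tm} {t : Tm} (h : x ∈ varsL t) :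
    height (σ x) ≤ height (subst σ t) := by
  induction t using tind with
  | hv y => simp at h; subst h; simp
  | ha f ts ih =>
    simp only [varsL_app, List.mem_flatMap] at h
    obtain ⟨t, ht, hx⟩ := h
    calc height (σ x) ≤ height (subst σ t) := ih t ht hx
    _ ≤ height (subst σ (app f ts)) := by
        simp only [subst_app]
        exact le_of_lt (height_le_of_mem (List.mem_map_of_mem ht) f)

theorem occurs_check {x : ℕ} {f : ℕ} {ts : List Tm} (h : x ∈ varsL (app f ts))
    (σ : ℕ → Tm) : subst σ (var x) ≠ subst σ (app f ts) := by
  intro he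
  simp only [varsL_app, List.mem_flatMap] at h
  obtain ⟨t, ht, hx⟩ := h
  have h1 : height (σ x) ≤ height (subst σ t) := height_subst_le hx
  have h2 : height (subst σ t) < height (subst σ (app f ts)) := by
    simp only [subst_app]
    exact height_le_of_mem (List.mem_map_of_mem ht) f
  rw [subst_var] at he
  rw [← he] at h2
  omega

end Tm

namespace Tm

def single (x : ℕ) (u : Tm) : ℕ → Tm := fun y => if y = x then u else var y

def UnifiesL (σ : ℕ → Tm) (E : List (Tm × Tm)) : Prop :=
  ∀ p ∈ E, subst σ p.1 = subst σ p.2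

def MGUL (θ : ℕ → Tm) (E : List (Tm × Tm)) : Prop :=
  Finitary' θ ∧ UnifiesL θ E ∧
    ∀ σ, Finitary' σ → UnifiesL σ E → ∃ ρ, Finitary' ρ ∧ ∀ x, σ x = subst ρ (θ x)

def evars (E : List (Tm × Tm)) : Finset ℕ :=
  (E.flatMap fun p => p.1.varsL ++ p.2.varsL).toFinset

def esize (E : List (Tm × Tm)) : ℕ := (E.map fun p => size p.1 + size p.2).sum

theorem finitary_var : Finitary' Tm.var := by
  simp [Finitary', Set.finite_empty]

theorem finitary_single (x : ℕ) (u : Tm) : Finitary' (single x u) := by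
  apply Set.Finite.subset (Set.finite_singleton x)
  intro y hy
  simp only [Set.mem_setOf_eq, single] at hy
  by_contra h
  simp_all

theorem finitary_comp {θ₀ θ₁ : ℕ → Tm} (h₀ : Finitary' θ₀) (h₁ : Finitary' θ₁) :
    Finitary' (fun y => subst θ₁ (θ₀ y)) := by
  apply Set.Finite.subset (h₀.union h₁)
  intro y hy
  simp only [Set.mem_setOf_eq] at hy
  by_contra h
  simp only [Set.mem_union, Set.mem_setOf_eq, not_or, not_not] at h
  rw [h.1, subst_var, h.2] at hy
  exact hy rfl

theorem unifL_swap {σ : ℕ → Tm} {a b : Tm} {E : List (Tm × Tm)}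
    (h : UnifiesL σ ((a, b) :: E)) : UnifiesL σ ((b, a) :: E) := by
  intro p hp
  rcases List.mem_cons.1 hp with rfl | hp
  · exact (h (a, b) (by simp)).symm
  · exact h p (List.mem_cons_of_mem _ hp)

theorem mgul_swap {θ : ℕ → Tm} {a b : Tm} {E : List (Tm × Tm)}
    (h : MGUL θ ((a, b) :: E)) : MGUL θ ((b, a) :: E) :=
  ⟨h.1, unifL_swap h.2.1, fun σ hσ hu => h.2.2 σ hσ (unifL_swap hu)⟩

/-- the substituted tail -/
def esub (x : ℕ) (u : Tm) (E : List (Tm × Tm)) : List (Tm × Tm) :=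
  E.map fun p => (subst (single x u) p.1, subst (single x u) p.2)

theorem single_self (x : ℕ) (u : Tm) : single x u x = u := by simp [single]

theorem single_other {x y : ℕ} (u : Tm) (h : y ≠ x) : single x u y = var y := by
  simp [single, h]

theorem subst_single_of_not_mem {x : ℕ} {u t : Tm} (h : x ∉ varsL t) :
    subst (single x u) t = t := by
  rw [subst_congr_on (τ := Tm.var) fun y hy => single_other u (by rintro rfl; exact h hy)]
  exact subst_id t

/-- key: a unifier of `(var x, u) :: E'` unifies `esub x u E'` and conversely factors -/
theorem unif_esub {σ : ℕ → Tm} {x : ℕ} {u : Tm} {E' : List (Tm × Tm)}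
    (hx : σ x = subst σ u) (h : UnifiesL σ E') : UnifiesL σ (esub x u E') := by
  intro p hp
  simp only [esub, List.mem_map] at hp
  obtain ⟨q, hq, rfl⟩ := hp
  have key : ∀ t, subst σ (subst (single x u) t) = subst σ t := by
    intro t
    rw [subst_subst]
    apply subst_congr_on
    intro y _
    by_cases hyx : y = x
    · subst hyx; rw [single_self, hx]
    · rw [single_other _ hyx, subst_var]
  simp only [key]
  exact h q hq

theorem elim_core {x : ℕ} {u : Tm} (hx : x ∉ varsL u) {E' : List (Tm × Tm)}
    (hrec : ∃ θ, MGUL θ (esub x u E')) :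
    ∃ θ, MGUL θ ((Tm.var x, u) :: E') := by
  obtain ⟨θ', hθ'⟩ := hrec
  refine ⟨fun y => subst θ' (single x u y), finitary_comp (finitary_single x u) hθ'.1, ?_, ?_⟩
  · intro p hp
    rcases List.mem_cons.1 hp with rfl | hp
    · show subst _ (var x) = subst _ u
      rw [subst_var, single_self]
      have h1 : subst (fun y => subst θ' (single x u y)) u = subst θ' (subst (single x u) u) := by
        rw [subst_subst]
      rw [h1, subst_single_of_not_mem hx]
    · have h1 : ∀ t, subst (fun y => subst θ' (single x u y)) t
          = subst θ' (subst (single x u) t) := fun t => (subst_subst θ' (single x u) t).symm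
      rw [h1, h1]
      exact hθ'.2.1 _ (by simp only [esub, List.mem_map]; exact ⟨p, hp, rfl⟩)
  · intro σ hσ hu
    have hx' : σ x = subst σ u := by
      have := hu (var x, u) (by simp)
      simpa using this
    have hE' : UnifiesL σ E' := fun p hp => hu p (List.mem_cons_of_mem _ hp)
    obtain ⟨ρ, hρ, hfac⟩ := hθ'.2.2 σ hσ (unif_esub hx' hE')
    refine ⟨ρ, hρ, fun y => ?_⟩
    have h1 : subst ρ (subst θ' (single x u y)) = subst (fun z => subst ρ (θ' z)) (single x u y) :=
      subst_subst ρ θ' _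
    have h2 : (fun z => subst ρ (θ' z)) = σ := by funext z; exact (hfac z).symm
    rw [h1, h2]
    by_cases hyx : y = x
    · subst hyx; rw [single_self, ← hx']
    · rw [single_other _ hyx, subst_var]

end Tm

namespace Tm

theorem mem_evars {y : ℕ} {E : List (Tm × Tm)} :
    y ∈ evars E ↔ ∃ p ∈ E, y ∈ p.1.varsL ∨ y ∈ p.2.varsL := by
  simp [evars, List.mem_flatMap, List.mem_append]

theorem evars_swap_head (a b : Tm) (E : List (Tm × Tm)) :
    evars ((a, b) :: E) = evars ((b, a) :: E) := by
  ext y; simp only [mem_evars, List.mem_cons]; aesop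

theorem esize_cons (a b : Tm) (E : List (Tm × Tm)) :
    esize ((a, b) :: E) = size a + size b + esize E := by
  simp [esize]

theorem evars_esub_card {x : ℕ} {u : Tm} (hx : x ∉ varsL u) (E' : List (Tm × Tm)) :
    (evars (esub x u E')).card < (evars ((var x, u) :: E')).card := by
  have hxmem : x ∈ evars ((var x, u) :: E') := by
    rw [mem_evars]; exact ⟨(var x, u), by simp, by simp⟩
  refine lt_of_le_of_lt (Finset.card_le_card ?_) (Finset.card_erase_lt_of_mem hxmem)
  intro y hy
  rw [mem_evars] at hy
  obtain ⟨p, hp, hy⟩ := hy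
  simp only [esub, List.mem_map] at hp
  obtain ⟨q, hq, rfl⟩ := hp
  have key : ∀ t : Tm, y ∈ varsL (subst (single x u) t) →
      y ∈ (evars ((var x, u) :: E')).erase x ∨ (y ≠ x ∧ y ∈ varsL t) := by
    intro t ht
    obtain ⟨z, hz, hyz⟩ := mem_varsL_subst ht
    by_cases hzx : z = x
    · rw [hzx, single_self] at hyz
      left
      refine Finset.mem_erase.2 ⟨fun hyx => hx (hyx ▸ hyz), ?_⟩
      rw [mem_evars]; exact ⟨(var x, u), by simp, Or.inr hyz⟩
    · rw [single_other _ hzx, varsL_var, List.mem_singleton] at hyz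
      subst hyz
      exact Or.inr ⟨hzx, hz⟩
  have inE : ∀ s, (s = q.1 ∨ s = q.2) → y ≠ x → y ∈ varsL s →
      y ∈ (evars ((var x, u) :: E')).erase x := by
    intro s hs hyx hys
    refine Finset.mem_erase.2 ⟨hyx, ?_⟩
    rw [mem_evars]
    exact ⟨q, List.mem_cons_of_mem _ hq, by rcases hs with rfl | rfl
                                            · exact Or.inl hys
                                            · exact Or.inr hys⟩
  rcases hy with hy | hy
  · rcases key q.1 hy with h | ⟨h1, h2⟩
    · exact h
    · exact inE q.1 (Or.inl rfl) h1 h2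
  · rcases key q.2 hy with h | ⟨h1, h2⟩
    · exact h
    · exact inE q.2 (Or.inr rfl) h1 h2

theorem evars_subset_of_mem_imp {E F : List (Tm × Tm)}
    (h : ∀ y, (∃ p ∈ E, y ∈ p.1.varsL ∨ y ∈ p.2.varsL) →
      ∃ p ∈ F, y ∈ p.1.varsL ∨ y ∈ p.2.varsL) : evars E ⊆ evars F := by
  intro y hy
  rw [mem_evars] at hy ⊢
  exact h y hy

theorem evars_tail_card (p : Tm × Tm) (E : List (Tm × Tm)) :
    (evars E).card ≤ (evars (p :: E)).card := by
  apply Finset.card_le_card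
  apply evars_subset_of_mem_imp
  rintro y ⟨q, hq, hy⟩
  exact ⟨q, List.mem_cons_of_mem _ hq, hy⟩

theorem map_eq_zip {α β : Type*} {f : α → β} : ∀ {ts us : List α},
    ts.map f = us.map f → ∀ p ∈ ts.zip us, f p.1 = f p.2
  | [], _, _, _, h => by simp at h
  | _ :: _, [], _, _, h => by simp at h
  | a :: ts, b :: us, h, p, hp => by
    simp only [List.map_cons, List.cons.injEq] at h
    rcases List.mem_cons.1 hp with rfl | hp
    · exact h.1
    · exact map_eq_zip h.2 p hp

theorem zip_map_eq {α β : Type*} {f : α → β} : ∀ {ts us : List α},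
    ts.length = us.length → (∀ p ∈ ts.zip us, f p.1 = f p.2) → ts.map f = us.map f
  | [], [], _, _ => rfl
  | a :: ts, b :: us, hl, h => by
    simp only [List.map_cons, List.cons.injEq]
    exact ⟨h (a, b) (by simp), zip_map_eq (by simpa using hl) fun p hp =>
      h p (List.mem_cons_of_mem _ hp)⟩

theorem esize_zip : ∀ (ts us : List Tm),
    esize (ts.zip us) ≤ (ts.map size).sum + (us.map size).sum
  | [], _ => by simp [esize]
  | _ :: _, [] => by simp [esize]
  | a :: ts, b :: us => by
    have := esize_zip ts us
    simp only [List.zip_cons_cons, esize_cons, List.map_cons, List.sum_cons]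
    omega

theorem esize_append (E F : List (Tm × Tm)) : esize (E ++ F) = esize E + esize F := by
  simp [esize]

theorem esize_decomp (f g : ℕ) (ts us : List Tm) (E' : List (Tm × Tm)) :
    esize (ts.zip us ++ E') < esize ((app f ts, app g us) :: E') := by
  rw [esize_append, esize_cons]
  have := esize_zip ts us
  simp only [size_app]
  omega

theorem evars_decomp_card (f g : ℕ) (ts us : List Tm) (E' : List (Tm × Tm)) :
    (evars (ts.zip us ++ E')).card ≤ (evars ((app f ts, app g us) :: E')).card := by
  apply Finset.card_le_card
  apply evars_subset_of_mem_imp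
  rintro y ⟨p, hp, hy⟩
  rcases List.mem_append.1 hp with hp | hp
  · obtain ⟨h1, h2⟩ := List.of_mem_zip hp
    refine ⟨(app f ts, app g us), by simp, ?_⟩
    rcases hy with hy | hy
    · exact Or.inl (by simp [List.mem_flatMap]; exact ⟨p.1, h1, hy⟩)
    · exact Or.inr (by simp [List.mem_flatMap]; exact ⟨p.2, h2, hy⟩)
  · exact ⟨p, List.mem_cons_of_mem _ hp, hy⟩

end Tm

namespace Tm

theorem mguL : ∀ (E : List (Tm × Tm)), (∃ σ, Finitary' σ ∧ UnifiesL σ E) → ∃ θ, MGUL θ E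
  | [], _ =>
    ⟨Tm.var, finitary_var, fun p hp => absurd hp List.not_mem_nil,
      fun σ hσ _ => ⟨σ, hσ, fun x => by simp⟩⟩
  | (var x, u) :: E', ⟨σ, hσf, hσ⟩ => by
    have hxσ : σ x = subst σ u := by simpa using hσ (var x, u) (by simp)
    by_cases hxu : u = var x
    · subst hxu
      obtain ⟨θ, hθ⟩ := mguL E' ⟨σ, hσf, fun p hp => hσ p (List.mem_cons_of_mem _ hp)⟩
      refine ⟨θ, hθ.1, ?_, ?_⟩
      · intro p hp
        rcases List.mem_cons.1 hp with rfl | hp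
        · rfl
        · exact hθ.2.1 p hp
      · intro σ' hσ'f hσ'
        exact hθ.2.2 σ' hσ'f fun p hp => hσ' p (List.mem_cons_of_mem _ hp)
    · have hx : x ∉ varsL u := by
        match u, hxu with
        | var y, hxu => simp; rintro rfl; exact hxu rfl
        | app g us, _ =>
          intro hmem
          exact occurs_check hmem σ (by simpa using hxσ)
      exact elim_core hx (mguL (esub x u E')
        ⟨σ, hσf, unif_esub hxσ fun p hp => hσ p (List.mem_cons_of_mem _ hp)⟩)
  | (app f ts, var x) :: E', ⟨σ, hσf, hσ⟩ => by
    have hxσ : σ x = subst σ (app f ts) := by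
      have := hσ (app f ts, var x) (by simp)
      simpa using this.symm
    have hx : x ∉ varsL (app f ts) := fun hmem => occurs_check hmem σ (by simpa using hxσ)
    obtain ⟨θ, hθ⟩ := elim_core hx (mguL (esub x (app f ts) E')
      ⟨σ, hσf, unif_esub hxσ fun p hp => hσ p (List.mem_cons_of_mem _ hp)⟩)
    exact ⟨θ, mgul_swap hθ⟩
  | (app f ts, app g us) :: E', ⟨σ, hσf, hσ⟩ => by
    have hhead := hσ (app f ts, app g us) (by simp)
    simp only [subst_app, app.injEq] at hhead
    obtain ⟨rfl, hmap⟩ := hhead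
    have hlen : ts.length = us.length := by
      have := congrArg List.length hmap; simpa using this
    have hσ'' : UnifiesL σ (ts.zip us ++ E') := by
      intro p hp
      rcases List.mem_append.1 hp with hp | hp
      · exact map_eq_zip hmap p hp
      · exact hσ p (List.mem_cons_of_mem _ hp)
    obtain ⟨θ, hθ⟩ := mguL (ts.zip us ++ E') ⟨σ, hσf, hσ''⟩
    have unifOfZip : ∀ τ, UnifiesL τ (ts.zip us ++ E') → UnifiesL τ ((app f ts, app f us) :: E') := by
      intro τ hτ p hp
      rcases List.mem_cons.1 hp with rfl | hp
      · simp only [subst_app, app.injEq, true_and]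
        exact zip_map_eq hlen fun p hp => hτ p (List.mem_append_left _ hp)
      · exact hτ p (List.mem_append_right _ hp)
    refine ⟨θ, hθ.1, unifOfZip θ hθ.2.1, ?_⟩
    intro σ' hσ'f hσ'
    apply hθ.2.2 σ' hσ'f
    intro p hp
    have hhead' := hσ' (app f ts, app f us) (by simp)
    simp only [subst_app, app.injEq, true_and] at hhead'
    rcases List.mem_append.1 hp with hp | hp
    · exact map_eq_zip hhead' p hp
    · exact hσ' p (List.mem_cons_of_mem _ hp)
termination_by E => ((evars E).card, esize E)
decreasing_by
  · exact Prod.Lex.right' _ (evars_tail_card _ _) (by simp [esize_cons])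
  · exact Prod.Lex.left _ _ (evars_esub_card hx E')
  · exact Prod.Lex.left _ _ (by rw [evars_swap_head]; exact evars_esub_card hx E')
  · exact Prod.Lex.right' _ (evars_decomp_card f g ts us E') (esize_decomp f g ts us E')

end Tm

/-- if two terms are unifiable (by a finitary substitution), then
they have a most general unifier. -/
theorem mgu_exists (t u : Tm) (h : ∃ σ, Finitary σ ∧ Unifies σ t u) :
    ∃ θ, IsMGU θ t u := by
  obtain ⟨σ, hf, hu⟩ := h
  obtain ⟨θ, hθ⟩ := Tm.mguL [(t, u)]
    ⟨σ, hf, by intro p hp; simp at hp; subst hp; exact hu⟩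
  refine ⟨θ, hθ.1, hθ.2.1 (t, u) (by simp), fun σ' h1 h2 => ?_⟩
  exact hθ.2.2 σ' h1 (by intro p hp; simp at hp; subst hp; exact h2)
end

section
/- The set of wirings, with sum given by union of finite sets of flows and product given by the pointwise product of flows, forms a semiring (without additive inverses): addition is associative, commutative, with unit 0 (the empty set); multiplication is associative with unit I = (x ⊸ x); and multiplication distributes over addition with 0 annihilating. -/
open Tm

/-! ### Infrastructure -/

namespace WSR

open Tm

/-- Custom induction principle for `Tm`. -/
theorem tm_ind {P : Tm → Prop} (hv : ∀ x, P (.var x))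
    (ha : ∀ f ts, (∀ t ∈ ts, P t) → P (.app f ts)) : ∀ t, P t
  | .var x => hv x
  | .app f ts => ha f ts (fun t ht =>
      have : sizeOf t < sizeOf (Tm.app f ts) := by
        have := List.sizeOf_lt_of_mem ht; simp only [Tm.app.sizeOf_spec]; omega
      tm_ind hv ha t)
termination_by t => sizeOf t

@[simp] theorem subst_var (σ : ℕ → Tm) (x : ℕ) : subst σ (.var x) = σ x := by
  rw [subst]

@[simp] theorem subst_app (σ : ℕ → Tm) (f : ℕ) (ts : List Tm) :
    subst σ (.app f ts) = .app f (ts.map (subst σ)) := by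
  rw [subst]; simp

@[simp] theorem varsL_var (x : ℕ) : varsL (.var x) = [x] := by rw [varsL]

@[simp] theorem varsL_app (f : ℕ) (ts : List Tm) :
    varsL (.app f ts) = ts.flatMap varsL := by
  rw [varsL]; simp

/-- Size of a term. -/
def sz : Tm → ℕ
  | .var _ => 1
  | .app _ ts => 1 + (ts.attach.map fun ⟨t, _⟩ => sz t).sum

@[simp] theorem sz_var (x : ℕ) : sz (.var x) = 1 := by rw [sz]

@[simp] theorem sz_app (f : ℕ) (ts : List Tm) :
    sz (.app f ts) = 1 + (ts.map sz).sum := by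
  rw [sz]; simp

theorem sz_pos (t : Tm) : 0 < sz t := by
  induction t using tm_ind with
  | hv x => simp
  | ha f ts ih => simp

theorem subst_ext {σ τ : ℕ → Tm} {t : Tm} (h : ∀ x ∈ varsL t, σ x = τ x) :
    subst σ t = subst τ t := by
  induction t using tm_ind with
  | hv x => simpa using h x (by simp)
  | ha f ts ih =>
    simp only [subst_app, Tm.app.injEq, true_and]
    refine List.map_congr_left fun t ht => ih t ht fun x hx => h x ?_
    simp only [varsL_app, List.mem_flatMap]
    exact ⟨t, ht, hx⟩

@[simp] theorem subst_id (t : Tm) : subst (fun x => .var x) t = t := by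
  induction t using tm_ind with
  | hv x => simp
  | ha f ts ih =>
    simp only [subst_app, Tm.app.injEq, true_and]
    conv_rhs => rw [show ts = ts.map id from (List.map_id ts).symm]
    exact List.map_congr_left fun t ht => ih t ht

theorem subst_id_of_vars {σ : ℕ → Tm} {t : Tm} (h : ∀ x ∈ varsL t, σ x = .var x) :
    subst σ t = t := by
  rw [subst_ext h, subst_id]

theorem subst_subst (σ τ : ℕ → Tm) (t : Tm) :
    subst σ (subst τ t) = subst (fun x => subst σ (τ x)) t := by
  induction t using tm_ind with
  | hv x => simp
  | ha f ts ih =>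
    simp only [subst_app, List.map_map, Tm.app.injEq, true_and]
    exact List.map_congr_left fun t ht => ih t ht

theorem mem_varsL_subst {σ : ℕ → Tm} {t : Tm} {x : ℕ} :
    x ∈ varsL (subst σ t) ↔ ∃ y ∈ varsL t, x ∈ varsL (σ y) := by
  induction t using tm_ind with
  | hv y => simp
  | ha f ts ih =>
    simp only [subst_app, varsL_app, List.mem_flatMap, List.mem_map]
    constructor
    · rintro ⟨-, ⟨u, hu, rfl⟩, hx⟩
      obtain ⟨y, hy, hxy⟩ := (ih u hu).1 hx
      exact ⟨y, ⟨u, hu, hy⟩, hxy⟩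
    · rintro ⟨y, ⟨u, hu, hy⟩, hxy⟩
      exact ⟨subst σ u, ⟨u, hu, rfl⟩, (ih u hu).2 ⟨y, hy, hxy⟩⟩

theorem sz_le_sz_subst {σ : ℕ → Tm} {u : Tm} {x : ℕ} (hx : x ∈ varsL u) :
    sz (σ x) ≤ sz (subst σ u) := by
  induction u using tm_ind with
  | hv y => simp at hx; subst hx; simp
  | ha f ts ih =>
    simp only [varsL_app, List.mem_flatMap] at hx
    obtain ⟨t, ht, hxt⟩ := hx
    calc sz (σ x) ≤ sz (subst σ t) := ih t ht hxt
      _ ≤ sz (subst σ (.app f ts)) := by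
          simp only [subst_app, sz_app]
          have h2 : sz (subst σ t) ≤ ((ts.map (subst σ)).map sz).sum :=
            List.single_le_sum (by simp) _ (by simp; exact ⟨t, ht, rfl⟩)
          simp only [List.map_map] at h2 ⊢
          omega

theorem occur_check {σ : ℕ → Tm} {x : ℕ} {f : ℕ} {ts : List Tm}
    (hx : x ∈ varsL (.app f ts)) : sz (σ x) < sz (subst σ (.app f ts)) := by
  simp only [varsL_app, List.mem_flatMap] at hx
  obtain ⟨t, ht, hxt⟩ := hx
  have h1 : sz (σ x) ≤ sz (subst σ t) := sz_le_sz_subst hxt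
  have h2 : sz (subst σ t) ≤ ((ts.map (subst σ)).map sz).sum :=
    List.single_le_sum (by simp) _ (by simp; exact ⟨t, ht, rfl⟩)
  simp only [subst_app, sz_app, List.map_map]
  simp only [List.map_map] at h2
  omega

/-- Composition of substitutions. -/
def scomp (σ τ : ℕ → Tm) : ℕ → Tm := fun x => subst σ (τ x)

theorem subst_scomp (σ τ : ℕ → Tm) (t : Tm) :
    subst (scomp σ τ) t = subst σ (subst τ t) := (subst_subst σ τ t).symm

theorem Finitary.scomp {σ τ : ℕ → Tm} (hσ : Finitary σ) (hτ : Finitary τ) :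
    Finitary (WSR.scomp σ τ) := by
  apply Set.Finite.subset (hσ.union hτ)
  intro x hx
  simp only [Set.mem_setOf_eq, WSR.scomp] at hx
  by_contra hmem
  simp only [Set.mem_union, Set.mem_setOf_eq, not_or, not_not] at hmem
  rw [hmem.2] at hx
  exact hx (by simpa using hmem.1)

theorem finitary_var : Finitary (fun x => Tm.var x) := by
  simp [Finitary]

/-- Variables of a finitary substitution: support together with variables of images. -/
def svars (σ : ℕ → Tm) : Set ℕ := {x | σ x ≠ .var x} ∪ ⋃ x ∈ {x | σ x ≠ .var x}, {y | y ∈ varsL (σ x)}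

theorem Finitary.svars_finite {σ : ℕ → Tm} (hσ : Finitary σ) : (svars σ).Finite := by
  refine Set.Finite.union hσ (Set.Finite.biUnion hσ fun x _ => ?_)
  exact Set.Finite.ofFinset (varsL (σ x)).toFinset (by simp)

end WSR


namespace WSR

open Tm

/-- A permutation of `ℕ` with finite support. -/
def FinPerm (π : Equiv.Perm ℕ) : Prop := {x | π x ≠ x}.Finite

theorem FinPerm.symm {π : Equiv.Perm ℕ} (h : FinPerm π) : FinPerm π.symm := by
  have : {x | π.symm x ≠ x} ⊆ π '' {x | π x ≠ x} := by
    intro x hx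
    refine ⟨π.symm x, ?_, by simp⟩
    simp only [Set.mem_setOf_eq] at hx ⊢
    simpa using fun h' => hx (by conv_lhs => rw [← h']; simp)
  exact Set.Finite.subset (h.image π) this

theorem FinPerm.finitary {π : Equiv.Perm ℕ} (h : FinPerm π) :
    Finitary (fun x => Tm.var (π x)) := by
  apply Set.Finite.subset h
  intro x hx
  simp only [Set.mem_setOf_eq] at hx ⊢
  exact fun h' => hx (by rw [h'])

/-- Extend an injective map on a finite set to a finitely-supported permutation of `ℕ`. -/
theorem exists_perm_extend (s : Finset ℕ) (f : ℕ → ℕ) (hinj : Set.InjOn f s) :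
    ∃ π : Equiv.Perm ℕ, (∀ x ∈ s, π x = f x) ∧ FinPerm π := by
  classical
  set u : Finset ℕ := s ∪ s.image f with hu
  have hsu : s ⊆ u := Finset.subset_union_left
  have hfu : s.image f ⊆ u := Finset.subset_union_right
  have hcard : (u \ s).card = (u \ s.image f).card := by
    rw [Finset.card_sdiff_of_subset hsu, Finset.card_sdiff_of_subset hfu, Finset.card_image_of_injOn hinj]
  let e := Finset.equivOfCardEq hcard
  let F : {x // x ∈ u} → {x // x ∈ u} := fun x =>
    if hx : ↑x ∈ s then ⟨f x, hfu (Finset.mem_image_of_mem f hx)⟩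
    else ⟨↑(e ⟨↑x, Finset.mem_sdiff.2 ⟨x.2, hx⟩⟩),
      (Finset.mem_sdiff.1 (e ⟨↑x, Finset.mem_sdiff.2 ⟨x.2, hx⟩⟩).2).1⟩
  have hFinj : Function.Injective F := by
    intro x y hxy
    by_cases hx : ↑x ∈ s <;> by_cases hy : ↑y ∈ s <;>
      simp only [F, dif_pos, dif_neg, hx, hy, dite_true, dite_false] at hxy
    · exact Subtype.ext (hinj hx hy (by simpa using hxy))
    · exfalso
      have := (Finset.mem_sdiff.1 (e ⟨↑y, Finset.mem_sdiff.2 ⟨y.2, hy⟩⟩).2).2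
      exact this (by rw [← Subtype.ext_iff.1 hxy]; exact Finset.mem_image_of_mem f hx)
    · exfalso
      have := (Finset.mem_sdiff.1 (e ⟨↑x, Finset.mem_sdiff.2 ⟨x.2, hx⟩⟩).2).2
      exact this (by rw [Subtype.ext_iff.1 hxy]; exact Finset.mem_image_of_mem f hy)
    · have h0 := congrArg Subtype.val hxy
      have heq := e.injective (Subtype.ext h0)
      have h2 := congrArg (fun z : {a // a ∈ u \ s} => z.val) heq
      exact Subtype.ext h2
  have hFbij : Function.Bijective F := Finite.injective_iff_bijective.1 hFinj
  let σ : Equiv.Perm {x // x ∈ u} := Equiv.ofBijective F hFbij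
  let π : Equiv.Perm ℕ := σ.extendDomain (Equiv.refl _)
  refine ⟨π, fun x hx => ?_, ?_⟩
  · have hxu : x ∈ u := hsu hx
    have := Equiv.Perm.extendDomain_apply_subtype σ (Equiv.refl _) (b := x) hxu
    rw [this]
    show ((σ ⟨x, hxu⟩ : {x // x ∈ u}) : ℕ) = f x
    show ((F ⟨x, hxu⟩ : {x // x ∈ u}) : ℕ) = f x
    simp [F, hx]
  · apply Set.Finite.subset u.finite_toSet
    intro x hx
    simp only [Set.mem_setOf_eq] at hx
    by_contra hxu
    exact hx (Equiv.Perm.extendDomain_apply_not_subtype σ (Equiv.refl _) hxu)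

/-- A permutation fixing `T` pointwise and moving `S` out of `B`. -/
theorem exists_perm_avoid (T S B : Finset ℕ) (hST : ∀ x ∈ S, x ∉ T) :
    ∃ π : Equiv.Perm ℕ, FinPerm π ∧ (∀ x ∈ T, π x = x) ∧ ∀ x ∈ S, π x ∉ B := by
  classical
  set N : ℕ := (S ∪ T ∪ B).sup id + 1 with hN
  have hlt : ∀ x ∈ S ∪ T ∪ B, x < N := fun x hx =>
    Nat.lt_succ_of_le (Finset.le_sup (f := id) hx)
  set g : ℕ → ℕ := fun x => if x ∈ T then x else x + N with hg
  have hinj : Set.InjOn g ↑(T ∪ S) := by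
    rw [Finset.coe_union]
    intro x hx y hy hxy
    simp only [hg] at hxy
    by_cases hxT : x ∈ T <;> by_cases hyT : y ∈ T <;>
      simp only [hxT, hyT, if_true, if_false] at hxy
    · exact hxy
    · exfalso
      have hyS : y ∈ S := by rcases hy with h | h; exact absurd h hyT; exact h
      have : x < N := hlt x (by simp [hxT])
      omega
    · exfalso
      have hxS : x ∈ S := by rcases hx with h | h; exact absurd h hxT; exact h
      have : y < N := hlt y (by simp [hyT])
      omega
    · omega
  obtain ⟨π, hπ, hfin⟩ := exists_perm_extend (T ∪ S) g hinj
  refine ⟨π, hfin, fun x hx => ?_, fun x hx => ?_⟩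
  · rw [hπ x (Finset.mem_union_left _ hx)]; simp [hg, hx]
  · rw [hπ x (Finset.mem_union_right _ hx)]
    simp only [hg, hST x hx, if_false]
    intro hB
    have : x + N < N := hlt _ (by simp [hB])
    omega

@[simp] theorem rename_def (π : ℕ ≃ ℕ) (t : Tm) :
    rename π t = subst (fun x => Tm.var (π x)) t := rfl

theorem FlowEquiv.refl (f : UFlow) : FlowEquiv f f :=
  ⟨Equiv.refl ℕ, by simp, by simp⟩

theorem FlowEquiv.symm {f g : UFlow} (h : FlowEquiv f g) : FlowEquiv g f := by
  obtain ⟨π, h1, h2⟩ := h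
  refine ⟨π.symm, ?_, ?_⟩
  · rw [← h1]; simp [subst_subst]
  · rw [← h2]; simp [subst_subst]

theorem FlowEquiv.trans {f g h : UFlow} (h1 : FlowEquiv f g) (h2 : FlowEquiv g h) :
    FlowEquiv f h := by
  obtain ⟨π, hπ1, hπ2⟩ := h1
  obtain ⟨τ, hτ1, hτ2⟩ := h2
  refine ⟨π.trans τ, ?_, ?_⟩
  · rw [← hτ1, ← hπ1]; simp [subst_subst]
  · rw [← hτ2, ← hπ2]; simp [subst_subst]

/-- Variables of a flow, as a `Finset`. -/
def fvF (f : UFlow) : Finset ℕ := (varsL f.1 ++ varsL f.2).toFinset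

theorem flowVars_eq (f : UFlow) : flowVars f = ↑(fvF f) := by
  ext x
  simp [flowVars, fvF, tvars]

theorem mem_fvF {x : ℕ} {f : UFlow} : x ∈ fvF f ↔ x ∈ varsL f.1 ∨ x ∈ varsL f.2 := by
  simp [fvF]

/-- A flow equivalence can be realised by a finitely supported permutation. -/
theorem FlowEquiv.finperm {f g : UFlow} (h : FlowEquiv f g) :
    ∃ π : Equiv.Perm ℕ, FinPerm π ∧ rename π f.1 = g.1 ∧ rename π f.2 = g.2 := by
  obtain ⟨π0, h1, h2⟩ := h
  obtain ⟨π, hπ, hfin⟩ := exists_perm_extend (fvF f) π0 (π0.injective.injOn)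
  refine ⟨π, hfin, ?_, ?_⟩
  · rw [← h1]
    exact (subst_ext fun x hx => by rw [hπ x (mem_fvF.2 (Or.inl hx))]).symm
  · rw [← h2]
    exact (subst_ext fun x hx => by rw [hπ x (mem_fvF.2 (Or.inr hx))]).symm

end WSR


namespace WSR

open Tm

/-! ### Systems of equations and most general unifiers -/

/-- A substitution unifies a system of equations. -/
def USys (σ : ℕ → Tm) (E : List (Tm × Tm)) : Prop := ∀ p ∈ E, subst σ p.1 = subst σ p.2

/-- Most general unifier of a system. -/
def IsMGUS (θ : ℕ → Tm) (E : List (Tm × Tm)) : Prop :=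
  Finitary θ ∧ USys θ E ∧
    ∀ σ, Finitary σ → USys σ E → ∃ ρ, Finitary ρ ∧ ∀ x, σ x = subst ρ (θ x)

/-- Variables of a system. -/
def sysVars (E : List (Tm × Tm)) : Finset ℕ :=
  (E.flatMap fun p => varsL p.1 ++ varsL p.2).toFinset

theorem mem_sysVars {x : ℕ} {E : List (Tm × Tm)} :
    x ∈ sysVars E ↔ ∃ p ∈ E, x ∈ varsL p.1 ∨ x ∈ varsL p.2 := by
  simp [sysVars, List.mem_flatMap]

/-- Size of a system. -/
def szSys (E : List (Tm × Tm)) : ℕ := (E.map fun p => sz p.1 + sz p.2).sum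

/-- The support and image-variables of `θ` are inside `V` (modulo fixpoints). -/
def SubIn (θ : ℕ → Tm) (V : Finset ℕ) : Prop :=
  (∀ x, θ x ≠ .var x → x ∈ V) ∧ ∀ x, ∀ y ∈ varsL (θ x), y = x ∨ y ∈ V

theorem SubIn.mono {θ : ℕ → Tm} {V V' : Finset ℕ} (h : SubIn θ V) (hVV : V ⊆ V') :
    SubIn θ V' :=
  ⟨fun x hx => hVV (h.1 x hx), fun x y hy => (h.2 x y hy).imp id (fun h' => hVV h')⟩

theorem SubIn.subst_eq {θ : ℕ → Tm} {V : Finset ℕ} (h : SubIn θ V) {t : Tm}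
    (ht : ∀ x ∈ varsL t, x ∉ V) : subst θ t = t :=
  subst_id_of_vars fun x hx => by
    by_contra hne
    exact ht x hx (h.1 x hne)

theorem SubIn.vars_subst {θ : ℕ → Tm} {V : Finset ℕ} (h : SubIn θ V) {t : Tm} {y : ℕ}
    (hy : y ∈ varsL (subst θ t)) : y ∈ varsL t ∨ y ∈ V := by
  obtain ⟨z, hz, hyz⟩ := mem_varsL_subst.1 hy
  rcases h.2 z y hyz with rfl | hV
  · exact Or.inl hz
  · exact Or.inr hV

theorem SubIn.finitary {θ : ℕ → Tm} {V : Finset ℕ} (h : SubIn θ V) : Finitary θ :=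
  Set.Finite.subset V.finite_toSet fun x hx => h.1 x hx

/-- Transfer of MGU along systems with the same unifiers. -/
theorem IsMGUS.congr {θ : ℕ → Tm} {E E' : List (Tm × Tm)}
    (hEE : ∀ σ, USys σ E ↔ USys σ E') (h : IsMGUS θ E) : IsMGUS θ E' :=
  ⟨h.1, (hEE θ).1 h.2.1, fun σ hσ hu => h.2.2 σ hσ ((hEE σ).2 hu)⟩

theorem USys_cons {σ : ℕ → Tm} {t u : Tm} {E : List (Tm × Tm)} :
    USys σ ((t, u) :: E) ↔ subst σ t = subst σ u ∧ USys σ E := by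
  constructor
  · exact fun h => ⟨h (t, u) (List.mem_cons_self), fun p hp => h p (List.mem_cons_of_mem _ hp)⟩
  · rintro ⟨h1, h2⟩ p hp
    rcases List.mem_cons.1 hp with rfl | hp
    · exact h1
    · exact h2 p hp

/-- The elementary substitution `x ↦ u`. -/
def upd (x : ℕ) (u : Tm) : ℕ → Tm := fun z => if z = x then u else .var z

@[simp] theorem upd_same (x : ℕ) (u : Tm) : upd x u x = u := by simp [upd]

theorem upd_ne {x z : ℕ} (u : Tm) (h : z ≠ x) : upd x u z = .var z := by simp [upd, h]

theorem finitary_upd (x : ℕ) (u : Tm) : Finitary (upd x u) :=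
  Set.Finite.subset (Set.finite_singleton x) fun z hz => by
    by_contra h
    exact hz (upd_ne u h)

/-- Applying a substitution to every equation of a system. -/
def mapSub (σ : ℕ → Tm) (E : List (Tm × Tm)) : List (Tm × Tm) :=
  E.map fun p => (subst σ p.1, subst σ p.2)

theorem sysVars_mapSub_upd {x : ℕ} {u : Tm} (hx : x ∉ varsL u) (E : List (Tm × Tm)) :
    sysVars (mapSub (upd x u) E) ⊆ (sysVars ((.var x, u) :: E)).erase x := by
  intro y hy
  obtain ⟨p, hp, hyp⟩ := mem_sysVars.1 hy
  simp only [mapSub, List.mem_map] at hp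
  obtain ⟨q, hq, rfl⟩ := hp
  have key : ∀ a : Tm, y ∈ varsL (subst (upd x u) a) → (y ≠ x ∧ (y ∈ varsL a ∨ y ∈ varsL u)) := by
    intro a ha
    obtain ⟨z, hz, hyz⟩ := mem_varsL_subst.1 ha
    by_cases hzx : z = x
    · subst hzx
      simp only [upd_same] at hyz
      exact ⟨fun h => hx (h ▸ hyz), Or.inr hyz⟩
    · rw [upd_ne u hzx] at hyz
      simp only [varsL_var, List.mem_singleton] at hyz
      subst hyz
      exact ⟨hzx, Or.inl hz⟩
  have : y ≠ x ∧ (y ∈ varsL q.1 ∨ y ∈ varsL q.2 ∨ y ∈ varsL u) := by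
    rcases hyp with h | h
    · obtain ⟨h1, h2⟩ := key q.1 h
      exact ⟨h1, h2.imp id Or.inr⟩
    · obtain ⟨h1, h2⟩ := key q.2 h
      rcases h2 with h2 | h2
      · exact ⟨h1, Or.inr (Or.inl h2)⟩
      · exact ⟨h1, Or.inr (Or.inr h2)⟩
  refine Finset.mem_erase.2 ⟨this.1, mem_sysVars.2 ?_⟩
  rcases this.2 with h | h | h
  · exact ⟨q, List.mem_cons_of_mem _ hq, Or.inl h⟩
  · exact ⟨q, List.mem_cons_of_mem _ hq, Or.inr h⟩
  · exact ⟨(.var x, u), List.mem_cons_self, Or.inr h⟩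

/-- The variable elimination step produces an mgu. -/
theorem elim_step {x : ℕ} {u : Tm} {E : List (Tm × Tm)} (hx : x ∉ varsL u) {θ1 : ℕ → Tm}
    (h1 : IsMGUS θ1 (mapSub (upd x u) E)) (h1' : SubIn θ1 (sysVars (mapSub (upd x u) E))) :
    IsMGUS (scomp θ1 (upd x u)) ((.var x, u) :: E) ∧
      SubIn (scomp θ1 (upd x u)) (sysVars ((.var x, u) :: E)) := by
  obtain ⟨hθ1fin, hθ1u, hθ1m⟩ := h1
  have hxE : x ∈ sysVars ((Tm.var x, u) :: E) :=
    mem_sysVars.2 ⟨(.var x, u), List.mem_cons_self, Or.inl (by simp)⟩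
  have huE : ∀ y ∈ varsL u, y ∈ sysVars ((Tm.var x, u) :: E) := fun y hy =>
    mem_sysVars.2 ⟨(.var x, u), List.mem_cons_self, Or.inr hy⟩
  have hsub := sysVars_mapSub_upd hx E
  have hsub' : sysVars (mapSub (upd x u) E) ⊆ sysVars ((.var x, u) :: E) :=
    hsub.trans (Finset.erase_subset _ _)
  -- absorption: for any unifier σ of the head equation, σ ∘ upd = σ
  have absorb : ∀ σ : ℕ → Tm, σ x = subst σ u → ∀ z, subst σ (upd x u z) = σ z := by
    intro σ hσ z
    by_cases hzx : z = x
    · subst hzx; simp [hσ]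
    · rw [upd_ne u hzx]; simp
  constructor
  · refine ⟨Finitary.scomp hθ1fin (finitary_upd x u), ?_, ?_⟩
    · rw [USys_cons]
      constructor
      · show subst (scomp θ1 (upd x u)) (.var x) = subst (scomp θ1 (upd x u)) u
        rw [subst_scomp, subst_scomp]
        have l1 : subst (upd x u) (Tm.var x) = u := by simp
        have l2 : subst (upd x u) u = u :=
          subst_id_of_vars fun z hz => upd_ne u (fun h => hx (h ▸ hz))
        rw [l1, l2]
      · intro p hp
        rw [subst_scomp, subst_scomp]
        exact hθ1u (subst (upd x u) p.1, subst (upd x u) p.2)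
          (List.mem_map.2 ⟨p, hp, rfl⟩)
    · intro σ hσfin hσu
      have hhead : σ x = subst σ u := by
        have := (USys_cons.1 hσu).1
        simpa using this
      have hσE : USys σ (mapSub (upd x u) E) := by
        intro p hp
        simp only [mapSub, List.mem_map] at hp
        obtain ⟨q, hq, rfl⟩ := hp
        show subst σ (subst (upd x u) q.1) = subst σ (subst (upd x u) q.2)
        rw [subst_subst, subst_subst]
        have : (fun z => subst σ (upd x u z)) = σ := funext (absorb σ hhead)
        rw [this]
        exact (USys_cons.1 hσu).2 q hq
      obtain ⟨ρ, hρfin, hρ⟩ := hθ1m σ hσfin hσE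
      refine ⟨ρ, hρfin, fun z => ?_⟩
      show σ z = subst ρ (subst θ1 (upd x u z))
      rw [subst_subst]
      have : (fun w => subst ρ (θ1 w)) = σ := funext fun w => (hρ w).symm
      rw [this]
      exact (absorb σ hhead z).symm
  · constructor
    · intro z hz
      by_cases hzx : z = x
      · subst hzx; exact hxE
      · have : scomp θ1 (upd x u) z = θ1 z := by
          rw [scomp, upd_ne u hzx]; simp
        rw [this] at hz
        exact hsub' (h1'.1 z hz)
    · intro z y hy
      obtain ⟨w, hw, hyw⟩ :=
        mem_varsL_subst.1 (show y ∈ varsL (subst θ1 (upd x u z)) from hy)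
      rcases h1'.2 w y hyw with rfl | hV
      · -- y = w ∈ varsL (upd x u z)
        by_cases hzx : z = x
        · subst hzx
          simp only [upd_same] at hw
          exact Or.inr (huE _ hw)
        · rw [upd_ne u hzx] at hw
          simp only [varsL_var, List.mem_singleton] at hw
          exact Or.inl hw
      · exact Or.inr (hsub' hV)

end WSR


namespace WSR

open Tm

theorem USys_append {σ : ℕ → Tm} {A B : List (Tm × Tm)} :
    USys σ (A ++ B) ↔ USys σ A ∧ USys σ B := by
  constructor
  · exact fun h => ⟨fun p hp => h p (List.mem_append_left _ hp),
      fun p hp => h p (List.mem_append_right _ hp)⟩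
  · rintro ⟨h1, h2⟩ p hp
    rcases List.mem_append.1 hp with hp | hp
    · exact h1 p hp
    · exact h2 p hp

theorem map_eq_iff_zip {ts us : List Tm} (h : ts.length = us.length) (σ : ℕ → Tm) :
    ts.map (subst σ) = us.map (subst σ) ↔ ∀ p ∈ ts.zip us, subst σ p.1 = subst σ p.2 := by
  induction ts generalizing us with
  | nil => cases us with
    | nil => simp
    | cons b bs => simp at h
  | cons a as ih =>
    cases us with
    | nil => simp at h
    | cons b bs =>
      simp only [List.map_cons, List.cons.injEq, List.zip_cons_cons, List.mem_cons]
      rw [ih (by simpa using h)]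
      constructor
      · rintro ⟨h1, h2⟩ p hp
        rcases hp with rfl | hp
        · exact h1
        · exact h2 p hp
      · intro hall
        exact ⟨hall (a, b) (Or.inl rfl), fun p hp => hall p (Or.inr hp)⟩

theorem USys_decomp {σ : ℕ → Tm} {f : ℕ} {ts us : List Tm} {E : List (Tm × Tm)}
    (hlen : ts.length = us.length) :
    USys σ ((.app f ts, .app f us) :: E) ↔ USys σ (ts.zip us ++ E) := by
  rw [USys_cons, USys_append]
  simp only [subst_app, Tm.app.injEq, true_and]
  rw [map_eq_iff_zip hlen]
  exact Iff.rfl.and Iff.rfl |>.symm.symm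

theorem sysVars_decomp_subset {f g : ℕ} {ts us : List Tm} {E : List (Tm × Tm)} :
    sysVars (ts.zip us ++ E) ⊆ sysVars ((.app f ts, .app g us) :: E) := by
  intro y hy
  obtain ⟨p, hp, hyp⟩ := mem_sysVars.1 hy
  rcases List.mem_append.1 hp with hp | hp
  · have hmem := List.of_mem_zip hp
    refine mem_sysVars.2 ⟨(.app f ts, .app g us), List.mem_cons_self, ?_⟩
    rcases hyp with h | h
    · exact Or.inl (by simp only [varsL_app, List.mem_flatMap]; exact ⟨p.1, hmem.1, h⟩)
    · exact Or.inr (by simp only [varsL_app, List.mem_flatMap]; exact ⟨p.2, hmem.2, h⟩)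
  · exact mem_sysVars.2 ⟨p, List.mem_cons_of_mem _ hp, hyp⟩

theorem szSys_append (A B : List (Tm × Tm)) : szSys (A ++ B) = szSys A + szSys B := by
  simp [szSys]

theorem szSys_zip_le (ts us : List Tm) :
    szSys (ts.zip us) ≤ (ts.map sz).sum + (us.map sz).sum := by
  induction ts generalizing us with
  | nil => simp [szSys]
  | cons a as ih =>
    cases us with
    | nil => simp [szSys]
    | cons b bs =>
      simp only [List.zip_cons_cons, szSys, List.map_cons, List.sum_cons] at *
      have := ih bs
      omega

theorem sysVars_swap {t u : Tm} {E : List (Tm × Tm)} :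
    sysVars ((u, t) :: E) = sysVars ((t, u) :: E) := by
  ext y
  simp only [mem_sysVars, List.mem_cons]
  constructor
  · rintro ⟨p, hp | hp, hyp⟩
    · subst hp; exact ⟨(t, u), Or.inl rfl, hyp.symm⟩
    · exact ⟨p, Or.inr hp, hyp⟩
  · rintro ⟨p, hp | hp, hyp⟩
    · subst hp; exact ⟨(u, t), Or.inl rfl, hyp.symm⟩
    · exact ⟨p, Or.inr hp, hyp⟩

theorem USys_swap {σ : ℕ → Tm} {t u : Tm} {E : List (Tm × Tm)} :
    USys σ ((u, t) :: E) ↔ USys σ ((t, u) :: E) := by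
  rw [USys_cons, USys_cons]
  exact and_congr (eq_comm) Iff.rfl

theorem lexHelper {a b c d : ℕ} (h : a < c ∨ (a ≤ c ∧ b < d)) :
    Prod.Lex (· < ·) (· < ·) (a, b) (c, d) := by
  rcases h with h | ⟨h1, h2⟩
  · exact Prod.Lex.left _ _ h
  · rcases lt_or_eq_of_le h1 with h1 | rfl
    · exact Prod.Lex.left _ _ h1
    · exact Prod.Lex.right _ h2

theorem unifier_mapSub {σ : ℕ → Tm} {x : ℕ} {u : Tm} {E : List (Tm × Tm)}
    (hhead : σ x = subst σ u) (hE : USys σ E) : USys σ (mapSub (upd x u) E) := by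
  intro p hp
  simp only [mapSub, List.mem_map] at hp
  obtain ⟨q, hq, rfl⟩ := hp
  show subst σ (subst (upd x u) q.1) = subst σ (subst (upd x u) q.2)
  rw [subst_subst, subst_subst]
  have : (fun z => subst σ (upd x u z)) = σ := by
    funext z
    by_cases hzx : z = x
    · subst hzx; simp [hhead]
    · rw [upd_ne u hzx]; simp
  rw [this]
  exact hE q hq

/-- Existence of most general unifiers for unifiable systems. -/
theorem unify_exists : ∀ E : List (Tm × Tm), (∃ σ, Finitary σ ∧ USys σ E) →
    ∃ θ, IsMGUS θ E ∧ SubIn θ (sysVars E)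
  | [] => fun _ =>
      ⟨fun x => .var x,
        ⟨finitary_var, fun p hp => by simp at hp, fun σ hσ _ => ⟨σ, hσ, fun x => by simp⟩⟩,
        fun x hx => absurd rfl hx, fun x y hy => by simp at hy; exact Or.inl hy⟩
  | (t, u) :: E' => fun h => by
      obtain ⟨σ0, hσ0fin, hσ0⟩ := h
      have hhead : subst σ0 t = subst σ0 u := (USys_cons.1 hσ0).1
      have htail : USys σ0 E' := (USys_cons.1 hσ0).2
      have hmono : sysVars E' ⊆ sysVars ((t, u) :: E') := fun y hy => by
        obtain ⟨p, hp, hyp⟩ := mem_sysVars.1 hy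
        exact mem_sysVars.2 ⟨p, List.mem_cons_of_mem _ hp, hyp⟩
      match t, u with
      | .var x, .var y =>
        by_cases hxy : y = x
        · have hdecA : Prod.Lex (· < ·) (· < ·)
              ((sysVars E').card, szSys E')
              ((sysVars ((Tm.var x, Tm.var y) :: E')).card, szSys ((Tm.var x, Tm.var y) :: E')) := by
            refine lexHelper (Or.inr ⟨Finset.card_le_card hmono, ?_⟩)
            simp only [szSys, List.map_cons, List.sum_cons, sz_var]
            omega
          obtain ⟨θ, hθ, hθ'⟩ := unify_exists E' ⟨σ0, hσ0fin, htail⟩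
          refine ⟨θ, IsMGUS.congr (fun σ => ?_) hθ, hθ'.mono hmono⟩
          rw [USys_cons]
          simp [hxy]
        · -- eliminate x ↦ var y
          have hx : x ∉ varsL (Tm.var y) := by simpa using fun h => hxy h.symm
          have hh : σ0 x = subst σ0 (Tm.var y) := by simpa using hhead
          have hcard : (sysVars (mapSub (upd x (Tm.var y)) E')).card <
              (sysVars ((Tm.var x, Tm.var y) :: E')).card := by
            have h1 := Finset.card_le_card (sysVars_mapSub_upd hx E')
            have h2 : x ∈ sysVars ((Tm.var x, Tm.var y) :: E') :=
              mem_sysVars.2 ⟨_, List.mem_cons_self, Or.inl (by simp)⟩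
            have h3 := Finset.card_erase_lt_of_mem h2
            omega
          have hdecB : Prod.Lex (· < ·) (· < ·)
              ((sysVars (mapSub (upd x (Tm.var y)) E')).card, szSys (mapSub (upd x (Tm.var y)) E'))
              ((sysVars ((Tm.var x, Tm.var y) :: E')).card, szSys ((Tm.var x, Tm.var y) :: E')) :=
            lexHelper (Or.inl hcard)
          obtain ⟨θ1, hθ1, hθ1'⟩ := unify_exists (mapSub (upd x (Tm.var y)) E')
            ⟨σ0, hσ0fin, unifier_mapSub hh htail⟩
          obtain ⟨hm, hs⟩ := elim_step hx hθ1 hθ1'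
          exact ⟨_, hm, hs⟩
      | .var x, .app g us =>
        by_cases hx : x ∈ varsL (Tm.app g us)
        · exfalso
          have h1 : sz (σ0 x) < sz (subst σ0 (Tm.app g us)) := occur_check hx
          rw [← hhead] at h1
          simp at h1
        · have hh : σ0 x = subst σ0 (Tm.app g us) := by simpa using hhead
          have hcard : (sysVars (mapSub (upd x (Tm.app g us)) E')).card <
              (sysVars ((Tm.var x, Tm.app g us) :: E')).card := by
            have h1 := Finset.card_le_card (sysVars_mapSub_upd hx E')
            have h2 : x ∈ sysVars ((Tm.var x, Tm.app g us) :: E') :=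
              mem_sysVars.2 ⟨_, List.mem_cons_self, Or.inl (by simp)⟩
            have h3 := Finset.card_erase_lt_of_mem h2
            omega
          have hdecC : Prod.Lex (· < ·) (· < ·)
              ((sysVars (mapSub (upd x (Tm.app g us)) E')).card,
                szSys (mapSub (upd x (Tm.app g us)) E'))
              ((sysVars ((Tm.var x, Tm.app g us) :: E')).card,
                szSys ((Tm.var x, Tm.app g us) :: E')) :=
            lexHelper (Or.inl hcard)
          obtain ⟨θ1, hθ1, hθ1'⟩ := unify_exists (mapSub (upd x (Tm.app g us)) E')
            ⟨σ0, hσ0fin, unifier_mapSub hh htail⟩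
          obtain ⟨hm, hs⟩ := elim_step hx hθ1 hθ1'
          exact ⟨_, hm, hs⟩
      | .app f ts, .var x =>
        by_cases hx : x ∈ varsL (Tm.app f ts)
        · exfalso
          have h1 : sz (σ0 x) < sz (subst σ0 (Tm.app f ts)) := occur_check hx
          rw [hhead] at h1
          simp at h1
        · have hh : σ0 x = subst σ0 (Tm.app f ts) := by simpa using hhead.symm
          have hcard : (sysVars (mapSub (upd x (Tm.app f ts)) E')).card <
              (sysVars ((Tm.app f ts, Tm.var x) :: E')).card := by
            have h1 := Finset.card_le_card (sysVars_mapSub_upd hx E')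
            have h2 : x ∈ sysVars ((Tm.app f ts, Tm.var x) :: E') :=
              mem_sysVars.2 ⟨_, List.mem_cons_self, Or.inr (by simp)⟩
            have h3 := Finset.card_erase_lt_of_mem h2
            rw [sysVars_swap] at h1
            omega
          have hdecD : Prod.Lex (· < ·) (· < ·)
              ((sysVars (mapSub (upd x (Tm.app f ts)) E')).card,
                szSys (mapSub (upd x (Tm.app f ts)) E'))
              ((sysVars ((Tm.app f ts, Tm.var x) :: E')).card,
                szSys ((Tm.app f ts, Tm.var x) :: E')) :=
            lexHelper (Or.inl hcard)
          obtain ⟨θ1, hθ1, hθ1'⟩ := unify_exists (mapSub (upd x (Tm.app f ts)) E')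
            ⟨σ0, hσ0fin, unifier_mapSub hh htail⟩
          obtain ⟨hm, hs⟩ := elim_step hx hθ1 hθ1'
          refine ⟨_, IsMGUS.congr (fun σ => USys_swap) hm, ?_⟩
          rw [← sysVars_swap]
          exact hs
      | .app f ts, .app g us =>
        have hfg : f = g ∧ ts.map (subst σ0) = us.map (subst σ0) := by
          simpa using hhead
        have heq : f = g := hfg.1
        have hmap := hfg.2
        have hlen : ts.length = us.length := by
          have := congrArg List.length hmap
          simpa using this
        have hequiv : ∀ σ, USys σ ((Tm.app f ts, Tm.app g us) :: E') ↔
            USys σ (ts.zip us ++ E') := by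
          intro σ
          rw [heq]
          exact USys_decomp hlen
        have hunif : USys σ0 (ts.zip us ++ E') := (hequiv σ0).1 hσ0
        have hsz : szSys (ts.zip us ++ E') < szSys ((Tm.app f ts, Tm.app g us) :: E') := by
          rw [szSys_append]
          have := szSys_zip_le ts us
          simp only [szSys, List.map_cons, List.sum_cons, sz_app]
          simp only [szSys] at this ⊢
          omega
        have hdecE : Prod.Lex (· < ·) (· < ·)
            ((sysVars (ts.zip us ++ E')).card, szSys (ts.zip us ++ E'))
            ((sysVars ((Tm.app f ts, Tm.app g us) :: E')).card,
              szSys ((Tm.app f ts, Tm.app g us) :: E')) :=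
          lexHelper (Or.inr ⟨Finset.card_le_card sysVars_decomp_subset, hsz⟩)
        obtain ⟨θ, hθ, hθ'⟩ := unify_exists (ts.zip us ++ E') ⟨σ0, hσ0fin, hunif⟩
        exact ⟨θ, IsMGUS.congr (fun σ => (hequiv σ).symm) hθ,
          hθ'.mono sysVars_decomp_subset⟩
termination_by E => ((sysVars E).card, szSys E)
decreasing_by
  · exact hdecA
  · exact hdecB
  · exact hdecC
  · exact hdecD
  · exact hdecE

end WSR


namespace WSR

open Tm

theorem map_eq_self {g : Tm → Tm} : ∀ {ts : List Tm}, ts.map g = ts → ∀ t ∈ ts, g t = t := by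
  intro ts
  induction ts with
  | nil => intro _ t ht; simp at ht
  | cons a as ih =>
    intro h t ht
    simp only [List.map_cons, List.cons.injEq] at h
    rcases List.mem_cons.1 ht with rfl | ht
    · exact h.1
    · exact ih h.2 t ht

theorem varinv {σ₁ σ₂ : ℕ → Tm} : ∀ {t : Tm}, subst σ₂ (subst σ₁ t) = t →
    ∀ x ∈ varsL t, ∃ y, σ₁ x = .var y ∧ σ₂ y = .var x := by
  intro t
  induction t using tm_ind with
  | hv x =>
    intro h z hz
    simp only [varsL_var, List.mem_singleton] at hz
    subst hz
    simp only [subst_var] at h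
    cases hσ : σ₁ z with
    | var y =>
      rw [hσ] at h
      exact ⟨y, rfl, by simpa using h⟩
    | app f ts =>
      rw [hσ] at h
      simp only [subst_app] at h
      exact absurd h (by simp)
  | ha f ts ih =>
    intro h x hx
    simp only [subst_app, List.map_map, Tm.app.injEq, true_and] at h
    simp only [varsL_app, List.mem_flatMap] at hx
    obtain ⟨t, ht, hxt⟩ := hx
    have := map_eq_self h t ht
    exact ih t ht this x hxt

/-- Two mgus of the same system give results equal up to renaming. -/
theorem mgus_unique {θ τ : ℕ → Tm} {E : List (Tm × Tm)} (hθ : IsMGUS θ E) (hτ : IsMGUS τ E)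
    (a b : Tm) : ∃ π : Equiv.Perm ℕ, FinPerm π ∧
      rename π (subst θ a) = subst τ a ∧ rename π (subst θ b) = subst τ b := by
  classical
  obtain ⟨ρ, hρfin, hρ⟩ := hτ.2.2 θ hθ.1 hθ.2.1
  obtain ⟨ρ', hρ'fin, hρ'⟩ := hθ.2.2 τ hτ.1 hτ.2.1
  have hθτ : ∀ c : Tm, subst θ c = subst ρ (subst τ c) := by
    intro c
    rw [subst_subst]
    exact subst_ext fun x _ => hρ x
  have hτθ : ∀ c : Tm, subst τ c = subst ρ' (subst θ c) := by
    intro c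
    rw [subst_subst]
    exact subst_ext fun x _ => hρ' x
  have hinv : ∀ c : Tm, subst ρ (subst ρ' (subst θ c)) = subst θ c := by
    intro c
    rw [← hτθ c, ← hθτ c]
  have hvar : ∀ c : Tm, ∀ x ∈ varsL (subst θ c), ∃ y, ρ' x = .var y ∧ ρ y = .var x :=
    fun c => varinv (hinv c)
  set W : Finset ℕ := (varsL (subst θ a) ++ varsL (subst θ b)).toFinset with hW
  have hmemW : ∀ x ∈ W, ∃ y, ρ' x = .var y ∧ ρ y = .var x := by
    intro x hx
    rw [hW, List.mem_toFinset, List.mem_append] at hx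
    rcases hx with hx | hx
    · exact hvar a x hx
    · exact hvar b x hx
  set g : ℕ → ℕ := fun x => if hx : ∃ y, ρ' x = .var y ∧ ρ y = .var x then hx.choose else x
    with hg
  have hgspec : ∀ x ∈ W, ρ' x = .var (g x) ∧ ρ (g x) = .var x := by
    intro x hx
    have h := hmemW x hx
    rw [hg]
    simp only [dif_pos h]
    exact h.choose_spec
  have hginj : Set.InjOn g ↑W := by
    intro x1 h1 x2 h2 heq
    have e1 := (hgspec x1 h1).2
    have e2 := (hgspec x2 h2).2
    rw [heq] at e1
    rw [e1] at e2
    injection e2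
  obtain ⟨π, hπ, hπfin⟩ := exists_perm_extend W g hginj
  refine ⟨π, hπfin, ?_, ?_⟩
  · rw [rename_def, hτθ a]
    exact subst_ext fun x hx => by
      have hxW : x ∈ W := by rw [hW, List.mem_toFinset, List.mem_append]; exact Or.inl hx
      rw [hπ x hxW, (hgspec x hxW).1]
  · rw [rename_def, hτθ b]
    exact subst_ext fun x hx => by
      have hxW : x ∈ W := by rw [hW, List.mem_toFinset, List.mem_append]; exact Or.inr hx
      rw [hπ x hxW, (hgspec x hxW).1]

/-- Composition of mgus: an mgu of `E1` followed by an mgu of the instantiated `E2`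
is an mgu of the combined system. -/
theorem mgus_comp {θ1 θ2 : ℕ → Tm} {E1 E2 : List (Tm × Tm)}
    (h1 : IsMGUS θ1 E1) (h2 : IsMGUS θ2 (mapSub θ1 E2)) :
    IsMGUS (scomp θ2 θ1) (E1 ++ E2) := by
  refine ⟨Finitary.scomp h2.1 h1.1, ?_, ?_⟩
  · rw [USys_append]
    constructor
    · intro p hp
      rw [subst_scomp, subst_scomp, h1.2.1 p hp]
    · intro p hp
      rw [subst_scomp, subst_scomp]
      exact h2.2.1 (subst θ1 p.1, subst θ1 p.2) (List.mem_map.2 ⟨p, hp, rfl⟩)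
  · intro σ hσfin hσ
    rw [USys_append] at hσ
    obtain ⟨ρ, hρfin, hρ⟩ := h1.2.2 σ hσfin hσ.1
    have hρu : USys ρ (mapSub θ1 E2) := by
      intro p hp
      simp only [mapSub, List.mem_map] at hp
      obtain ⟨q, hq, rfl⟩ := hp
      show subst ρ (subst θ1 q.1) = subst ρ (subst θ1 q.2)
      rw [subst_subst, subst_subst]
      have : (fun x => subst ρ (θ1 x)) = σ := funext fun x => (hρ x).symm
      rw [this]
      exact hσ.2 q hq
    obtain ⟨ρ', hρ'fin, hρ'⟩ := h2.2.2 ρ hρfin hρu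
    refine ⟨ρ', hρ'fin, fun x => ?_⟩
    show σ x = subst ρ' (subst θ2 (θ1 x))
    rw [subst_subst]
    have h3 : (fun w => subst ρ' (θ2 w)) = ρ := funext fun w => (hρ' w).symm
    rw [h3]
    exact hρ x

/-- Post-composing an mgu with a finitely supported renaming yields an mgu. -/
theorem mgus_pcomp {π : Equiv.Perm ℕ} (hπ : FinPerm π) {θ : ℕ → Tm} {E : List (Tm × Tm)}
    (h : IsMGUS θ E) : IsMGUS (scomp (fun x => Tm.var (π x)) θ) E := by
  refine ⟨Finitary.scomp hπ.finitary h.1, ?_, ?_⟩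
  · intro p hp
    rw [subst_scomp, subst_scomp, h.2.1 p hp]
  · intro σ hσfin hσ
    obtain ⟨ρ, hρfin, hρ⟩ := h.2.2 σ hσfin hσ
    refine ⟨scomp ρ (fun x => Tm.var (π.symm x)), Finitary.scomp hρfin hπ.symm.finitary,
      fun x => ?_⟩
    show σ x = subst (scomp ρ fun y => Tm.var (π.symm y)) (subst (fun z => Tm.var (π z)) (θ x))
    rw [subst_subst]
    have h4 : subst (fun z => subst (scomp ρ fun y => Tm.var (π.symm y)) (Tm.var (π z))) (θ x)
        = subst ρ (θ x) := subst_ext fun z _ => by simp [scomp]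
    rw [h4]
    exact hρ x

/-- Conjugation of a substitution by a permutation. -/
def conj (π : Equiv.Perm ℕ) (θ : ℕ → Tm) : ℕ → Tm := fun x => rename π (θ (π.symm x))

theorem subst_conj (π : Equiv.Perm ℕ) (θ : ℕ → Tm) (t : Tm) :
    subst (conj π θ) (rename π t) = rename π (subst θ t) := by
  rw [rename_def, rename_def, subst_subst, subst_subst]
  exact subst_ext fun x _ => by simp [conj]

theorem mgus_conj {π : Equiv.Perm ℕ} (hπ : FinPerm π) {θ : ℕ → Tm} {E : List (Tm × Tm)}
    (h : IsMGUS θ E) : IsMGUS (conj π θ) (mapSub (fun x => Tm.var (π x)) E) := by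
  have hconjfin : Finitary (conj π θ) := by
    have : {x | conj π θ x ≠ .var x} ⊆ π '' {x | θ x ≠ .var x} := by
      intro x hx
      refine ⟨π.symm x, ?_, by simp⟩
      simp only [Set.mem_setOf_eq] at hx ⊢
      intro hc
      exact hx (by simp [conj, hc])
    exact Set.Finite.subset (h.1.image π) this
  refine ⟨hconjfin, ?_, ?_⟩
  · intro p hp
    simp only [mapSub, List.mem_map] at hp
    obtain ⟨q, hq, rfl⟩ := hp
    show subst (conj π θ) (rename π q.1) = subst (conj π θ) (rename π q.2)
    rw [subst_conj, subst_conj, h.2.1 q hq]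
  · intro σ hσfin hσ
    have hσ' : USys (scomp σ (fun x => Tm.var (π x))) E := by
      intro q hq
      rw [subst_scomp, subst_scomp]
      exact hσ (rename π q.1, rename π q.2) (List.mem_map.2 ⟨q, hq, rfl⟩)
    obtain ⟨ρ, hρfin, hρ⟩ := h.2.2 _ (Finitary.scomp hσfin hπ.finitary) hσ'
    refine ⟨scomp ρ (fun y => Tm.var (π.symm y)), Finitary.scomp hρfin hπ.symm.finitary,
      fun x => ?_⟩
    show σ x = subst (scomp ρ fun y => Tm.var (π.symm y))
      (subst (fun z => Tm.var (π z)) (θ (π.symm x)))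
    rw [subst_subst]
    have h4 : subst (fun z => subst (scomp ρ fun y => Tm.var (π.symm y)) (Tm.var (π z)))
        (θ (π.symm x)) = subst ρ (θ (π.symm x)) := subst_ext fun z _ => by simp [scomp]
    rw [h4, ← hρ (π.symm x)]
    simp [scomp]

theorem SubIn.conj {θ : ℕ → Tm} {V : Finset ℕ} (h : SubIn θ V) (π : Equiv.Perm ℕ) :
    SubIn (WSR.conj π θ) (V.image π) := by
  constructor
  · intro x hx
    have hne : θ (π.symm x) ≠ .var (π.symm x) := by
      intro hc
      exact hx (by simp [WSR.conj, hc])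
    exact Finset.mem_image.2 ⟨π.symm x, h.1 _ hne, by simp⟩
  · intro x y hy
    rw [WSR.conj, rename_def] at hy
    obtain ⟨z, hz, hyz⟩ := mem_varsL_subst.1 hy
    simp only [varsL_var, List.mem_singleton] at hyz
    subst hyz
    rcases h.2 (π.symm x) z hz with rfl | hV
    · exact Or.inl (by simp)
    · exact Or.inr (Finset.mem_image.2 ⟨z, hV, rfl⟩)

theorem isMGUS_singleton {θ : ℕ → Tm} {t u : Tm} : IsMGUS θ [(t, u)] ↔ IsMGU θ t u := by
  have husys : ∀ σ : ℕ → Tm, USys σ [(t, u)] ↔ Unifies σ t u := by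
    intro σ
    constructor
    · exact fun h => h (t, u) (by simp)
    · intro h p hp
      simp only [List.mem_singleton] at hp
      subst hp
      exact h
  constructor
  · exact fun h => ⟨h.1, (husys θ).1 h.2.1, fun σ hσ hu => h.2.2 σ hσ ((husys σ).2 hu)⟩
  · exact fun h => ⟨h.1, (husys θ).2 h.2.1, fun σ hσ hu => h.2.2 σ hσ ((husys σ).1 hu)⟩

end WSR


namespace WSR

open Tm

theorem rename_fix {π : ℕ ≃ ℕ} {t : Tm} (h : ∀ x ∈ varsL t, π x = x) : rename π t = t := by
  rw [rename_def]
  exact subst_id_of_vars fun x hx => by rw [h x hx]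

theorem mem_varsL_rename {π : ℕ ≃ ℕ} {t : Tm} {x : ℕ} :
    x ∈ varsL (rename π t) ↔ ∃ y ∈ varsL t, x = π y := by
  rw [rename_def]
  rw [mem_varsL_subst]
  constructor
  · rintro ⟨y, hy, hx⟩
    simp only [varsL_var, List.mem_singleton] at hx
    exact ⟨y, hy, hx⟩
  · rintro ⟨y, hy, rfl⟩
    exact ⟨y, hy, by simp⟩

theorem disj_iff {f g : UFlow} :
    flowVars f ∩ flowVars g = ∅ ↔ ∀ x ∈ fvF f, x ∉ fvF g := by
  rw [flowVars_eq, flowVars_eq, Set.eq_empty_iff_forall_notMem]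
  constructor
  · intro h x hx hx'
    exact h x ⟨by exact_mod_cast hx, by exact_mod_cast hx'⟩
  · rintro h x ⟨h1, h2⟩
    exact h x (by exact_mod_cast h1) (by exact_mod_cast h2)

theorem finitary_subin {σ : ℕ → Tm} (hσ : Finitary σ) :
    SubIn σ (Finitary.svars_finite hσ).toFinset := by
  constructor
  · intro x hx
    rw [Set.Finite.mem_toFinset]
    exact Or.inl hx
  · intro x y hy
    by_cases hx : σ x = .var x
    · rw [hx] at hy
      simp only [varsL_var, List.mem_singleton] at hy
      exact Or.inl hy
    · refine Or.inr ?_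
      rw [Set.Finite.mem_toFinset]
      exact Or.inr (Set.mem_biUnion hx hy)

theorem mem_sysVars_pair {x : ℕ} {a b : Tm} :
    x ∈ sysVars [(a, b)] ↔ x ∈ varsL a ∨ x ∈ varsL b := by
  simp [mem_sysVars]

theorem USys_pair_swap {σ : ℕ → Tm} {a b c d : Tm} :
    USys σ [(a, b), (c, d)] ↔ USys σ [(c, d), (a, b)] := by
  constructor <;>
  · intro h p hp
    apply h
    simp only [List.mem_cons, List.mem_singleton] at hp ⊢
    tauto

theorem mapSub_pair (σ : ℕ → Tm) (a b : Tm) :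
    mapSub σ [(a, b)] = [(subst σ a, subst σ b)] := rfl

/-- The mgu `x ↦ t` of `var x ≐ t` for `x` not occurring in `t`. -/
theorem upd_mgu {b : ℕ} {t : Tm} (hb : b ∉ varsL t) : IsMGUS (upd b t) [(Tm.var b, t)] := by
  refine ⟨finitary_upd b t, ?_, ?_⟩
  · intro p hp
    simp only [List.mem_singleton] at hp
    subst hp
    show subst (upd b t) (Tm.var b) = subst (upd b t) t
    rw [subst_var, upd_same]
    exact (subst_id_of_vars fun z hz => upd_ne t fun h => hb (by rw [← h]; exact hz)).symm
  · intro σ hσfin hσ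
    have hhead : σ b = subst σ t := by
      have := hσ (Tm.var b, t) (by simp)
      simpa using this
    refine ⟨σ, hσfin, fun z => ?_⟩
    by_cases hzb : z = b
    · subst hzb
      rw [upd_same]
      exact hhead
    · rw [upd_ne t hzb]
      simp

theorem upd_mgu' {b : ℕ} {t : Tm} (hb : b ∉ varsL t) : IsMGUS (upd b t) [(t, Tm.var b)] :=
  IsMGUS.congr (fun σ => by
    constructor
    · intro h p hp
      simp only [List.mem_singleton] at hp
      subst hp
      exact (h (Tm.var b, t) (by simp)).symm
    · intro h p hp
      simp only [List.mem_singleton] at hp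
      subst hp
      exact (h (t, Tm.var b) (by simp)).symm) (upd_mgu hb)

theorem IsMGU_iff_MGUS {θ : ℕ → Tm} {t u : Tm} : IsMGU θ t u ↔ IsMGUS θ [(t, u)] :=
  isMGUS_singleton.symm

/-- Left unit law. -/
theorem unit_left (F : Wiring) : WEq (wmul wI F) F := by
  constructor
  · rintro p ⟨i, hi, g, hg, f', g', θ, hif', hgg', hdisj, hmgu, rfl⟩
    have hI : FlowEquiv ((Tm.var 0 : Tm), (Tm.var 0 : Tm)) f' := FlowEquiv.trans hi hif'
    obtain ⟨π, hπ1, hπ2⟩ := hI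
    set b : ℕ := π 0 with hbdef
    have hf'1 : f'.1 = Tm.var b := by rw [← hπ1]; simp [hbdef]
    have hf'2 : f'.2 = Tm.var b := by rw [← hπ2]; simp [hbdef]
    have hbg : b ∉ fvF g' := by
      intro hb
      have : b ∈ fvF f' := by
        rw [mem_fvF, hf'1]
        simp
      exact disj_iff.1 hdisj b this hb
    have hb1 : b ∉ varsL g'.1 := fun h => hbg (mem_fvF.2 (Or.inl h))
    have hb2 : b ∉ varsL g'.2 := fun h => hbg (mem_fvF.2 (Or.inr h))
    have hθS : IsMGUS θ [(Tm.var b, g'.1)] := by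
      rw [← hf'2]
      exact IsMGU_iff_MGUS.1 hmgu
    have hτS : IsMGUS (upd b g'.1) [(Tm.var b, g'.1)] := upd_mgu hb1
    obtain ⟨κ, hκfin, hκ1, hκ2⟩ := mgus_unique hθS hτS (Tm.var b) g'.2
    refine ⟨g, hg, FlowEquiv.trans ⟨κ, ?_, ?_⟩ (FlowEquiv.symm hgg')⟩
    · show rename κ (subst θ f'.1) = g'.1
      rw [hf'1, hκ1]
      simp
    · rw [hκ2]
      exact subst_id_of_vars fun z hz => upd_ne g'.1 fun h => hb2 (by rw [← h]; exact hz)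
  · intro g hg
    obtain ⟨b, hb⟩ := Infinite.exists_notMem_finset (fvF g)
    have hb1 : b ∉ varsL g.1 := fun h => hb (mem_fvF.2 (Or.inl h))
    have hb2 : b ∉ varsL g.2 := fun h => hb (mem_fvF.2 (Or.inr h))
    refine ⟨g, ⟨((Tm.var b : Tm), (Tm.var b : Tm)), ?_, g, hg,
      ((Tm.var b : Tm), (Tm.var b : Tm)), g, upd b g.1, FlowEquiv.refl _, FlowEquiv.refl _,
      ?_, IsMGU_iff_MGUS.2 (upd_mgu hb1), ?_⟩, FlowEquiv.refl g⟩
    · exact ⟨Equiv.swap 0 b, by simp [Equiv.swap_apply_left], by simp [Equiv.swap_apply_left]⟩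
    · rw [disj_iff]
      intro x hx
      rw [mem_fvF] at hx
      simp only [varsL_var, List.mem_singleton] at hx
      have : x = b := by tauto
      subst this
      exact hb
    · have e1 : subst (upd b g.1) (Tm.var b) = g.1 := by simp
      have e2 : subst (upd b g.1) g.2 = g.2 :=
        subst_id_of_vars fun z hz => upd_ne g.1 fun h => hb2 (by rw [← h]; exact hz)
      show g = ((subst (upd b g.1) (Tm.var b), subst (upd b g.1) g.2) : UFlow)
      rw [e1, e2]

/-- Right unit law. -/
theorem unit_right (F : Wiring) : WEq (wmul F wI) F := by
  constructor
  · rintro p ⟨f, hf, i, hi, f', g', θ, hff', hig', hdisj, hmgu, rfl⟩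
    have hI : FlowEquiv ((Tm.var 0 : Tm), (Tm.var 0 : Tm)) g' := FlowEquiv.trans hi hig'
    obtain ⟨π, hπ1, hπ2⟩ := hI
    set b : ℕ := π 0 with hbdef
    have hg'1 : g'.1 = Tm.var b := by rw [← hπ1]; simp [hbdef]
    have hg'2 : g'.2 = Tm.var b := by rw [← hπ2]; simp [hbdef]
    have hbf : b ∉ fvF f' := by
      intro hbf
      refine disj_iff.1 hdisj b hbf ?_
      rw [mem_fvF, hg'1]
      simp
    have hb1 : b ∉ varsL f'.1 := fun h => hbf (mem_fvF.2 (Or.inl h))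
    have hb2 : b ∉ varsL f'.2 := fun h => hbf (mem_fvF.2 (Or.inr h))
    have hθS : IsMGUS θ [(f'.2, Tm.var b)] := by
      rw [← hg'1]
      exact IsMGU_iff_MGUS.1 hmgu
    have hτS : IsMGUS (upd b f'.2) [(f'.2, Tm.var b)] := upd_mgu' hb2
    obtain ⟨κ, hκfin, hκ1, hκ2⟩ := mgus_unique hθS hτS f'.1 (Tm.var b)
    refine ⟨f, hf, FlowEquiv.trans ⟨κ, ?_, ?_⟩ (FlowEquiv.symm hff')⟩
    · rw [hκ1]
      exact subst_id_of_vars fun z hz => upd_ne f'.2 fun h => hb1 (by rw [← h]; exact hz)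
    · show rename κ (subst θ g'.2) = f'.2
      rw [hg'2, hκ2]
      simp
  · intro f hf
    obtain ⟨b, hb⟩ := Infinite.exists_notMem_finset (fvF f)
    have hb1 : b ∉ varsL f.1 := fun h => hb (mem_fvF.2 (Or.inl h))
    have hb2 : b ∉ varsL f.2 := fun h => hb (mem_fvF.2 (Or.inr h))
    refine ⟨f, ⟨f, hf, ((Tm.var b : Tm), (Tm.var b : Tm)), ?_, f,
      ((Tm.var b : Tm), (Tm.var b : Tm)), upd b f.2, FlowEquiv.refl _, FlowEquiv.refl _,
      ?_, IsMGU_iff_MGUS.2 (upd_mgu' hb2), ?_⟩, FlowEquiv.refl f⟩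
    · exact ⟨Equiv.swap 0 b, by simp [Equiv.swap_apply_left], by simp [Equiv.swap_apply_left]⟩
    · rw [disj_iff]
      intro x hx hx'
      rw [mem_fvF] at hx'
      simp only [varsL_var, List.mem_singleton] at hx'
      have : x = b := by tauto
      subst this
      exact hb hx
    · have e1 : subst (upd b f.2) f.1 = f.1 :=
        subst_id_of_vars fun z hz => upd_ne f.2 fun h => hb1 (by rw [← h]; exact hz)
      have e2 : subst (upd b f.2) (Tm.var b) = f.2 := by simp
      show f = ((subst (upd b f.2) f.1, subst (upd b f.2) (Tm.var b)) : UFlow)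
      rw [e1, e2]

end WSR


namespace WSR

open Tm

theorem mem_fvF_rename {κ : ℕ ≃ ℕ} {a : UFlow} {x : ℕ} :
    x ∈ fvF ((rename κ a.1, rename κ a.2) : UFlow) ↔ ∃ y ∈ fvF a, x = κ y := by
  rw [mem_fvF]
  constructor
  · rintro (h | h) <;> obtain ⟨y, hy, rfl⟩ := mem_varsL_rename.1 h
    · exact ⟨y, mem_fvF.2 (Or.inl hy), rfl⟩
    · exact ⟨y, mem_fvF.2 (Or.inr hy), rfl⟩
  · rintro ⟨y, hy, rfl⟩
    rcases mem_fvF.1 hy with h | h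
    · exact Or.inl (mem_varsL_rename.2 ⟨y, h, rfl⟩)
    · exact Or.inr (mem_varsL_rename.2 ⟨y, h, rfl⟩)

/-- Triple product characterisation. -/
def TP (f g h p : UFlow) : Prop :=
  ∃ f' g' h' Θ, FlowEquiv f f' ∧ FlowEquiv g g' ∧ FlowEquiv h h' ∧
    (∀ x ∈ fvF f', x ∉ fvF g') ∧ (∀ x ∈ fvF f', x ∉ fvF h') ∧ (∀ x ∈ fvF g', x ∉ fvF h') ∧
    IsMGUS Θ [(f'.2, g'.1), (g'.2, h'.1)] ∧ p = (subst Θ f'.1, subst Θ h'.2)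

/-- Normalisation: rename an mgu-presented product away from a third flow `c`,
fixing the result of the product. -/
theorem conj_normalize {a b c : UFlow} {θ' : ℕ → Tm} (hmgu : IsMGUS θ' [(a.2, b.1)])
    (hdisjab : ∀ x ∈ fvF a, x ∉ fvF b)
    (hdisjT : ∀ x ∈ fvF ((subst θ' a.1, subst θ' b.2) : UFlow), x ∉ fvF c) :
    ∃ (a₂ b₂ : UFlow) (Θ : ℕ → Tm),
      FlowEquiv a a₂ ∧ FlowEquiv b b₂ ∧ IsMGUS Θ [(a₂.2, b₂.1)] ∧
      subst Θ a₂.1 = subst θ' a.1 ∧ subst Θ b₂.2 = subst θ' b.2 ∧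
      (∀ x ∈ fvF a₂, x ∉ fvF c) ∧ (∀ x ∈ fvF b₂, x ∉ fvF c) ∧
      (∀ x ∈ fvF a₂, x ∉ fvF b₂) ∧
      subst Θ c.1 = c.1 ∧ subst Θ c.2 = c.2 := by
  classical
  have hθ'fin : Finitary θ' := hmgu.1
  set e : UFlow := (subst θ' a.1, subst θ' b.2) with hedef
  set S0 : Finset ℕ := (Finitary.svars_finite hθ'fin).toFinset with hS0def
  have hS0 : SubIn θ' S0 := finitary_subin hθ'fin
  set T : Finset ℕ := fvF e with hTdef
  set V : Finset ℕ := fvF a ∪ fvF b ∪ S0 with hVdef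
  set S : Finset ℕ := V \ T with hSdef
  set B : Finset ℕ := fvF c ∪ T ∪ V with hBdef
  obtain ⟨κ, hκfin, hκT, hκS⟩ := exists_perm_avoid T S B
    (fun x hx => (Finset.mem_sdiff.1 hx).2)
  have hκV : ∀ x ∈ V, κ x ∉ fvF c := by
    intro x hx
    by_cases hxT : x ∈ T
    · rw [hκT x hxT]
      exact hdisjT x hxT
    · intro hc
      exact hκS x (Finset.mem_sdiff.2 ⟨hx, hxT⟩)
        (Finset.mem_union_left _ (Finset.mem_union_left _ hc))
  set a₂ : UFlow := (rename κ a.1, rename κ a.2) with ha₂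
  set b₂ : UFlow := (rename κ b.1, rename κ b.2) with hb₂
  set Θ : ℕ → Tm := conj κ θ' with hΘdef
  have hmguΘ : IsMGUS Θ [(a₂.2, b₂.1)] := by
    have := mgus_conj hκfin hmgu
    simpa [mapSub, ha₂, hb₂] using this
  have hfix : ∀ t : Tm, (∀ x ∈ varsL t, x ∈ T) → rename κ t = t :=
    fun t ht => rename_fix fun x hx => hκT x (ht x hx)
  have hres1 : subst Θ a₂.1 = subst θ' a.1 := by
    show subst (conj κ θ') (rename κ a.1) = _
    rw [subst_conj]
    exact hfix _ fun x hx => mem_fvF.2 (Or.inl hx)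
  have hres2 : subst Θ b₂.2 = subst θ' b.2 := by
    show subst (conj κ θ') (rename κ b.2) = _
    rw [subst_conj]
    exact hfix _ fun x hx => mem_fvF.2 (Or.inr hx)
  have hSubΘ : SubIn Θ (S0.image κ) := SubIn.conj hS0 κ
  have hS0c : ∀ x ∈ S0.image κ, x ∉ fvF c := by
    rintro x hx
    obtain ⟨y, hy, rfl⟩ := Finset.mem_image.1 hx
    exact hκV y (Finset.mem_union_right _ hy)
  have hfixc1 : subst Θ c.1 = c.1 :=
    SubIn.subst_eq hSubΘ fun x hx hmem => hS0c x hmem (mem_fvF.2 (Or.inl hx))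
  have hfixc2 : subst Θ c.2 = c.2 :=
    SubIn.subst_eq hSubΘ fun x hx hmem => hS0c x hmem (mem_fvF.2 (Or.inr hx))
  refine ⟨a₂, b₂, Θ, ⟨κ, rfl, rfl⟩, ⟨κ, rfl, rfl⟩, hmguΘ, hres1, hres2, ?_, ?_, ?_,
    hfixc1, hfixc2⟩
  · intro x hx
    obtain ⟨y, hy, rfl⟩ := mem_fvF_rename.1 hx
    exact hκV y (Finset.mem_union_left _ (Finset.mem_union_left _ hy))
  · intro x hx
    obtain ⟨y, hy, rfl⟩ := mem_fvF_rename.1 hx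
    exact hκV y (Finset.mem_union_left _ (Finset.mem_union_right _ hy))
  · intro x hx hx'
    obtain ⟨y, hy, rfl⟩ := mem_fvF_rename.1 hx
    obtain ⟨z, hz, hzz⟩ := mem_fvF_rename.1 hx'
    have : y = z := κ.injective hzz
    subst this
    exact hdisjab y hy hz

/-- Left-associated product implies the triple-product form. -/
theorem lemA {f g h e p : UFlow} (h1 : IsProd f g e) (h2 : IsProd e h p) : TP f g h p := by
  obtain ⟨f₁, g₁, θ1, hff₁, hgg₁, hdisj1, hmgu1, he⟩ := h1
  obtain ⟨e', h', θ2, hee', hhh', hdisj2, hmgu2, hp⟩ := h2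
  obtain ⟨π, hπfin, hπ1, hπ2⟩ := FlowEquiv.finperm hee'
  set θ1' : ℕ → Tm := scomp (fun x => Tm.var (π x)) θ1 with hθ1'def
  have hmgu1' : IsMGUS θ1' [(f₁.2, g₁.1)] := mgus_pcomp hπfin (IsMGU_iff_MGUS.1 hmgu1)
  have he'1 : subst θ1' f₁.1 = e'.1 := by
    rw [← hπ1, he, subst_scomp]
    rfl
  have he'2 : subst θ1' g₁.2 = e'.2 := by
    rw [← hπ2, he, subst_scomp]
    rfl
  have he'pair : ((subst θ1' f₁.1, subst θ1' g₁.2) : UFlow) = e' := by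
    rw [he'1, he'2]
  obtain ⟨f₂, g₂, Θ2, hf₁f₂, hg₁g₂, hmguΘ2, hr1, hr2, hf₂h', hg₂h', hf₂g₂, hfx1, hfx2⟩ :=
    conj_normalize (a := f₁) (b := g₁) (c := h') hmgu1' (disj_iff.1 hdisj1)
      (by rw [he'pair]; exact disj_iff.1 hdisj2)
  have hr1' : subst Θ2 f₂.1 = e'.1 := by rw [hr1, he'1]
  have hr2' : subst Θ2 g₂.2 = e'.2 := by rw [hr2, he'2]
  have hmgu2' : IsMGUS θ2 (mapSub Θ2 [(g₂.2, h'.1)]) := by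
    rw [mapSub_pair, hr2', hfx1]
    exact IsMGU_iff_MGUS.1 hmgu2
  have hcomp := mgus_comp hmguΘ2 hmgu2'
  refine ⟨f₂, g₂, h', scomp θ2 Θ2, FlowEquiv.trans hff₁ hf₁f₂, FlowEquiv.trans hgg₁ hg₁g₂,
    hhh', hf₂g₂, hf₂h', hg₂h', hcomp, ?_⟩
  rw [hp]
  have q1 : subst (scomp θ2 Θ2) f₂.1 = subst θ2 e'.1 := by rw [subst_scomp, hr1']
  have q2 : subst (scomp θ2 Θ2) h'.2 = subst θ2 h'.2 := by rw [subst_scomp, hfx2]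
  rw [q1, q2]

/-- Right-associated product implies the triple-product form. -/
theorem lemA' {f g h m p : UFlow} (h1 : IsProd g h m) (h2 : IsProd f m p) : TP f g h p := by
  obtain ⟨g₁, h₁, σ1, hgg₁, hhh₁, hdisj1, hmgu1, hm⟩ := h1
  obtain ⟨f', m', θ2, hff', hmm', hdisj2, hmgu2, hp⟩ := h2
  obtain ⟨π, hπfin, hπ1, hπ2⟩ := FlowEquiv.finperm hmm'
  set σ1' : ℕ → Tm := scomp (fun x => Tm.var (π x)) σ1 with hσ1'def
  have hmgu1' : IsMGUS σ1' [(g₁.2, h₁.1)] := mgus_pcomp hπfin (IsMGU_iff_MGUS.1 hmgu1)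
  have hm'1 : subst σ1' g₁.1 = m'.1 := by
    rw [← hπ1, hm, subst_scomp]
    rfl
  have hm'2 : subst σ1' h₁.2 = m'.2 := by
    rw [← hπ2, hm, subst_scomp]
    rfl
  have hm'pair : ((subst σ1' g₁.1, subst σ1' h₁.2) : UFlow) = m' := by
    rw [hm'1, hm'2]
  obtain ⟨g₂, h₂, SS1, hg₁g₂, hh₁h₂, hmguSS1, hr1, hr2, hg₂f', hh₂f', hg₂h₂, hfx1, hfx2⟩ :=
    conj_normalize (a := g₁) (b := h₁) (c := f') hmgu1' (disj_iff.1 hdisj1)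
      (by
        rw [hm'pair]
        intro x hx hx'
        exact disj_iff.1 hdisj2 x hx' hx)
  have hr1' : subst SS1 g₂.1 = m'.1 := by rw [hr1, hm'1]
  have hr2' : subst SS1 h₂.2 = m'.2 := by rw [hr2, hm'2]
  have hmgu2' : IsMGUS θ2 (mapSub SS1 [(f'.2, g₂.1)]) := by
    rw [mapSub_pair, hr1', hfx2]
    exact IsMGU_iff_MGUS.1 hmgu2
  have hcomp := mgus_comp hmguSS1 hmgu2'
  have hcomp' : IsMGUS (scomp θ2 SS1) [(f'.2, g₂.1), (g₂.2, h₂.1)] :=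
    IsMGUS.congr (fun σ => USys_pair_swap) hcomp
  refine ⟨f', g₂, h₂, scomp θ2 SS1, hff', FlowEquiv.trans hgg₁ hg₁g₂,
    FlowEquiv.trans hhh₁ hh₁h₂, ?_, ?_, hg₂h₂, hcomp', ?_⟩
  · intro x hx hx'
    exact hg₂f' x hx' hx
  · intro x hx hx'
    exact hh₂f' x hx' hx
  · rw [hp]
    have q1 : subst (scomp θ2 SS1) f'.1 = subst θ2 f'.1 := by rw [subst_scomp, hfx1]
    have q2 : subst (scomp θ2 SS1) h₂.2 = subst θ2 m'.2 := by rw [subst_scomp, hr2']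
    rw [q1, q2]

end WSR


namespace WSR

open Tm

/-- From the triple-product form, build a right-associated product equivalent to `p`. -/
theorem lemB {f g h p : UFlow} (ht : TP f g h p) :
    ∃ m q, IsProd g h m ∧ IsProd f m q ∧ FlowEquiv p q := by
  obtain ⟨f', g', h', Θ, hff', hgg', hhh', hfg, hfh, hgh, hΘ, hp⟩ := ht
  have hΘ1 : subst Θ f'.2 = subst Θ g'.1 := hΘ.2.1 (f'.2, g'.1) (by simp)
  have hΘ2 : subst Θ g'.2 = subst Θ h'.1 := hΘ.2.1 (g'.2, h'.1) (by simp)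
  -- mgu of the inner pair
  obtain ⟨σ1, hσ1, hσ1V⟩ := unify_exists [(g'.2, h'.1)]
    ⟨Θ, hΘ.1, fun q hq => by
      simp only [List.mem_singleton] at hq
      subst hq
      exact hΘ2⟩
  have hVsub : ∀ x ∈ sysVars [(g'.2, h'.1)], x ∈ fvF g' ∨ x ∈ fvF h' := by
    intro x hx
    rcases mem_sysVars_pair.1 hx with hx | hx
    · exact Or.inl (mem_fvF.2 (Or.inr hx))
    · exact Or.inr (mem_fvF.2 (Or.inl hx))
  have hσ1fix : ∀ t : Tm, (∀ x ∈ varsL t, x ∈ fvF f') → subst σ1 t = t := by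
    intro t htv
    refine SubIn.subst_eq hσ1V fun x hx hmem => ?_
    rcases hVsub x hmem with hV | hV
    · exact hfg x (htv x hx) hV
    · exact hfh x (htv x hx) hV
  have hσ1f1 : subst σ1 f'.1 = f'.1 := hσ1fix _ fun x hx => mem_fvF.2 (Or.inl hx)
  have hσ1f2 : subst σ1 f'.2 = f'.2 := hσ1fix _ fun x hx => mem_fvF.2 (Or.inr hx)
  -- factor Θ through σ1
  obtain ⟨ρ, hρfin, hρ⟩ := hσ1.2.2 Θ hΘ.1 (fun q hq => by
    simp only [List.mem_singleton] at hq
    subst hq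
    exact hΘ2)
  have hρsub : ∀ c : Tm, subst Θ c = subst ρ (subst σ1 c) := by
    intro c
    rw [subst_subst]
    exact subst_ext fun x _ => hρ x
  -- mgu of the outer pair
  obtain ⟨σ2, hσ2, hσ2V⟩ := unify_exists [(f'.2, subst σ1 g'.1)]
    ⟨ρ, hρfin, fun q hq => by
      simp only [List.mem_singleton] at hq
      subst hq
      show subst ρ f'.2 = subst ρ (subst σ1 g'.1)
      calc subst ρ f'.2 = subst ρ (subst σ1 f'.2) := by rw [hσ1f2]
        _ = subst Θ f'.2 := (hρsub _).symm
        _ = subst Θ g'.1 := hΘ1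
        _ = subst ρ (subst σ1 g'.1) := hρsub _⟩
  set m : UFlow := (subst σ1 g'.1, subst σ1 h'.2) with hmdef
  have hm : IsProd g h m :=
    ⟨g', h', σ1, hgg', hhh', disj_iff.2 hgh, IsMGU_iff_MGUS.2 hσ1, rfl⟩
  have hmvars : ∀ x ∈ fvF m, x ∉ fvF f' := by
    intro x hx
    have : x ∈ varsL (subst σ1 g'.1) ∨ x ∈ varsL (subst σ1 h'.2) := mem_fvF.1 hx
    have hor : x ∈ fvF g' ∨ x ∈ fvF h' := by
      rcases this with hx' | hx'
      · rcases SubIn.vars_subst hσ1V hx' with hv | hv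
        · exact Or.inl (mem_fvF.2 (Or.inl hv))
        · exact hVsub x hv
      · rcases SubIn.vars_subst hσ1V hx' with hv | hv
        · exact Or.inr (mem_fvF.2 (Or.inr hv))
        · exact hVsub x hv
    intro hxf
    rcases hor with hx' | hx'
    · exact hfg x hxf hx'
    · exact hfh x hxf hx'
  set q : UFlow := (subst σ2 f'.1, subst σ2 m.2) with hqdef
  have hq : IsProd f m q :=
    ⟨f', m, σ2, hff', FlowEquiv.refl m,
      disj_iff.2 fun x hx hx' => hmvars x hx' hx, IsMGU_iff_MGUS.2 hσ2, rfl⟩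
  have hmap : mapSub σ1 [(f'.2, g'.1)] = [(f'.2, subst σ1 g'.1)] := by
    rw [mapSub_pair, hσ1f2]
  have hσ2' : IsMGUS σ2 (mapSub σ1 [(f'.2, g'.1)]) := by
    rw [hmap]
    exact hσ2
  have hcomp := mgus_comp hσ1 hσ2'
  have hcomp' : IsMGUS (scomp σ2 σ1) [(f'.2, g'.1), (g'.2, h'.1)] :=
    IsMGUS.congr (fun σ => USys_pair_swap) hcomp
  obtain ⟨π, hπfin, hπ1, hπ2⟩ := mgus_unique hΘ hcomp' f'.1 h'.2
  refine ⟨m, q, hm, hq, ⟨π, ?_, ?_⟩⟩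
  · rw [hp]
    show rename π (subst Θ f'.1) = q.1
    rw [hπ1, subst_scomp, hσ1f1]
  · rw [hp]
    show rename π (subst Θ h'.2) = q.2
    rw [hπ2, subst_scomp]

/-- From the triple-product form, build a left-associated product equivalent to `p`. -/
theorem lemB' {f g h p : UFlow} (ht : TP f g h p) :
    ∃ e q, IsProd f g e ∧ IsProd e h q ∧ FlowEquiv p q := by
  obtain ⟨f', g', h', Θ, hff', hgg', hhh', hfg, hfh, hgh, hΘ, hp⟩ := ht
  have hΘ1 : subst Θ f'.2 = subst Θ g'.1 := hΘ.2.1 (f'.2, g'.1) (by simp)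
  have hΘ2 : subst Θ g'.2 = subst Θ h'.1 := hΘ.2.1 (g'.2, h'.1) (by simp)
  -- mgu of the first pair
  obtain ⟨θ1, hθ1, hθ1V⟩ := unify_exists [(f'.2, g'.1)]
    ⟨Θ, hΘ.1, fun q hq => by
      simp only [List.mem_singleton] at hq
      subst hq
      exact hΘ1⟩
  have hVsub : ∀ x ∈ sysVars [(f'.2, g'.1)], x ∈ fvF f' ∨ x ∈ fvF g' := by
    intro x hx
    rcases mem_sysVars_pair.1 hx with hx | hx
    · exact Or.inl (mem_fvF.2 (Or.inr hx))
    · exact Or.inr (mem_fvF.2 (Or.inl hx))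
  have hθ1fix : ∀ t : Tm, (∀ x ∈ varsL t, x ∈ fvF h') → subst θ1 t = t := by
    intro t htv
    refine SubIn.subst_eq hθ1V fun x hx hmem => ?_
    rcases hVsub x hmem with hV | hV
    · exact hfh x hV (htv x hx)
    · exact hgh x hV (htv x hx)
  have hθ1h1 : subst θ1 h'.1 = h'.1 := hθ1fix _ fun x hx => mem_fvF.2 (Or.inl hx)
  have hθ1h2 : subst θ1 h'.2 = h'.2 := hθ1fix _ fun x hx => mem_fvF.2 (Or.inr hx)
  -- factor Θ through θ1
  obtain ⟨ρ, hρfin, hρ⟩ := hθ1.2.2 Θ hΘ.1 (fun q hq => by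
    simp only [List.mem_singleton] at hq
    subst hq
    exact hΘ1)
  have hρsub : ∀ c : Tm, subst Θ c = subst ρ (subst θ1 c) := by
    intro c
    rw [subst_subst]
    exact subst_ext fun x _ => hρ x
  -- mgu of the second pair
  obtain ⟨θ2, hθ2, hθ2V⟩ := unify_exists [(subst θ1 g'.2, h'.1)]
    ⟨ρ, hρfin, fun q hq => by
      simp only [List.mem_singleton] at hq
      subst hq
      show subst ρ (subst θ1 g'.2) = subst ρ h'.1
      calc subst ρ (subst θ1 g'.2) = subst Θ g'.2 := (hρsub _).symm
        _ = subst Θ h'.1 := hΘ2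
        _ = subst ρ (subst θ1 h'.1) := hρsub _
        _ = subst ρ h'.1 := by rw [hθ1h1]⟩
  set e : UFlow := (subst θ1 f'.1, subst θ1 g'.2) with hedef
  have he : IsProd f g e :=
    ⟨f', g', θ1, hff', hgg', disj_iff.2 hfg, IsMGU_iff_MGUS.2 hθ1, rfl⟩
  have hevars : ∀ x ∈ fvF e, x ∉ fvF h' := by
    intro x hx
    have : x ∈ varsL (subst θ1 f'.1) ∨ x ∈ varsL (subst θ1 g'.2) := mem_fvF.1 hx
    have hor : x ∈ fvF f' ∨ x ∈ fvF g' := by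
      rcases this with hx' | hx'
      · rcases SubIn.vars_subst hθ1V hx' with hv | hv
        · exact Or.inl (mem_fvF.2 (Or.inl hv))
        · exact hVsub x hv
      · rcases SubIn.vars_subst hθ1V hx' with hv | hv
        · exact Or.inr (mem_fvF.2 (Or.inr hv))
        · exact hVsub x hv
    rcases hor with hx' | hx'
    · exact hfh x hx'
    · exact hgh x hx'
  set q : UFlow := (subst θ2 e.1, subst θ2 h'.2) with hqdef
  have hq : IsProd e h q :=
    ⟨e, h', θ2, FlowEquiv.refl e, hhh', disj_iff.2 hevars, IsMGU_iff_MGUS.2 hθ2, rfl⟩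
  have hmap : mapSub θ1 [(g'.2, h'.1)] = [(subst θ1 g'.2, h'.1)] := by
    rw [mapSub_pair, hθ1h1]
  have hθ2' : IsMGUS θ2 (mapSub θ1 [(g'.2, h'.1)]) := by
    rw [hmap]
    exact hθ2
  have hcomp : IsMGUS (scomp θ2 θ1) [(f'.2, g'.1), (g'.2, h'.1)] := mgus_comp hθ1 hθ2'
  obtain ⟨π, hπfin, hπ1, hπ2⟩ := mgus_unique hΘ hcomp f'.1 h'.2
  refine ⟨e, q, he, hq, ⟨π, ?_, ?_⟩⟩
  · rw [hp]
    show rename π (subst Θ f'.1) = q.1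
    rw [hπ1, subst_scomp]
  · rw [hp]
    show rename π (subst Θ h'.2) = q.2
    rw [hπ2, subst_scomp, hθ1h2]

end WSR


open WSR in
/-- wirings form a semiring (without additive inverses): sum (union) is
associative, commutative, with unit `0 = ∅`; the product is associative with unit
`I = x ⊸ x` (up to renaming of flows, i.e. `WEq`); and the product distributes over
sums, with `0` annihilating. -/
theorem wiring_semiring :
    (∀ F G H : Wiring, (F ∪ G) ∪ H = F ∪ (G ∪ H)) ∧
    (∀ F G : Wiring, F ∪ G = G ∪ F) ∧
    (∀ F : Wiring, F ∪ ∅ = F) ∧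
    (∀ F G H : Wiring, (∀ f ∈ F, IsFlow f) → (∀ g ∈ G, IsFlow g) → (∀ h ∈ H, IsFlow h) →
      WEq (wmul (wmul F G) H) (wmul F (wmul G H))) ∧
    (∀ F : Wiring, (∀ f ∈ F, IsFlow f) → WEq (wmul wI F) F ∧ WEq (wmul F wI) F) ∧
    (∀ F G H : Wiring,
      wmul F (G ∪ H) = wmul F G ∪ wmul F H ∧ wmul (F ∪ G) H = wmul F H ∪ wmul G H) ∧
    (∀ F : Wiring, wmul F ∅ = ∅ ∧ wmul ∅ F = ∅) := by
  refine ⟨fun F G H => Set.union_assoc F G H, fun F G => Set.union_comm F G,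
    fun F => Set.union_empty F, ?_, ?_, ?_, ?_⟩
  · -- associativity of the product, up to renaming
    intro F G H _ _ _
    constructor
    · rintro p ⟨e, ⟨f, hf, g, hg, hprod1⟩, h, hh, hprod2⟩
      obtain ⟨m, q, hm, hq, hpq⟩ := lemB (lemA hprod1 hprod2)
      exact ⟨q, ⟨f, hf, m, ⟨g, hg, h, hh, hm⟩, hq⟩, hpq⟩
    · rintro p ⟨f, hf, m, ⟨g, hg, h, hh, hprod1⟩, hprod2⟩
      obtain ⟨e, q, he, hq, hpq⟩ := lemB' (lemA' hprod1 hprod2)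
      exact ⟨q, ⟨e, ⟨f, hf, g, hg, he⟩, h, hh, hq⟩, FlowEquiv.symm hpq⟩
  · intro F _
    exact ⟨unit_left F, unit_right F⟩
  · intro F G H
    constructor
    · ext p
      constructor
      · rintro ⟨f, hf, g, hg | hg, hprod⟩
        · exact Or.inl ⟨f, hf, g, hg, hprod⟩
        · exact Or.inr ⟨f, hf, g, hg, hprod⟩
      · rintro (⟨f, hf, g, hg, hprod⟩ | ⟨f, hf, g, hg, hprod⟩)
        · exact ⟨f, hf, g, Or.inl hg, hprod⟩
        · exact ⟨f, hf, g, Or.inr hg, hprod⟩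
    · ext p
      constructor
      · rintro ⟨f, hf | hf, g, hg, hprod⟩
        · exact Or.inl ⟨f, hf, g, hg, hprod⟩
        · exact Or.inr ⟨f, hf, g, hg, hprod⟩
      · rintro (⟨f, hf, g, hg, hprod⟩ | ⟨f, hf, g, hg, hprod⟩)
        · exact ⟨f, Or.inl hf, g, hg, hprod⟩
        · exact ⟨f, Or.inr hf, g, hg, hprod⟩
  · intro F
    constructor
    · ext p
      simp [wmul]
    · ext p
      simp [wmul]
end
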